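/- arXiv:1806.04648 — 8 statements merged into one kernel-verified Lean document; each statement's English description precedes it below -/
import Mathlib

section
/- For one-dimensional projections e and f on a Hilbert space H, the trace norm of e - f satisfies ‖e - f‖₁ = 2·√(1 - Tr(ef)). -/
open scoped InnerProductSpace

lemma exists_unit_vec {H : Type*} [NormedAddCommGroup H] [InnerProductSpace ℂ H] [CompleteSpace H]
    (e : H →L[ℂ] H) (he : IsSelfAdjoint e) (he' : IsIdempotentElem e)
    (hre : Module.finrank ℂ (LinearMap.range (e : H →ₗ[ℂ] H)) = 1) :
    ∃ u : H, ‖u‖ = 1 ∧ ∀ x, e x = ⟪u, x⟫_ℂ • u := by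
  obtain ⟨v, hv0, hv⟩ := finrank_eq_one_iff'.mp hre
  have hvne : (v : H) ≠ 0 := fun h => hv0 (Subtype.ext h)
  have hvnorm : ‖(v : H)‖ ≠ 0 := norm_ne_zero_iff.mpr hvne
  set u : H := ((‖(v : H)‖⁻¹ : ℝ) : ℂ) • (v : H) with hu_def
  have hunorm : ‖u‖ = 1 := by
    simp [hu_def, norm_smul, inv_mul_cancel₀ hvnorm]
  -- u is in range e
  have humem : u ∈ LinearMap.range (e : H →ₗ[ℂ] H) := by
    exact Submodule.smul_mem _ _ v.2
  -- e u = u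
  have heu : e u = u := by
    obtain ⟨w, hw⟩ := humem
    have : e (e w) = e w := by
      have := congrArg (fun T : H →L[ℂ] H => T w) he'
      simpa using this
    change e w = u at hw  -- hw : e w = u ?
    rw [← hw]; exact this
  refine ⟨u, hunorm, fun x => ?_⟩
  -- e x = c • u for some c
  obtain ⟨d, hd⟩ := hv ⟨e x, LinearMap.mem_range.mpr ⟨x, rfl⟩⟩
  have hd' : d • (v : H) = e x := congrArg Subtype.val hd
  have hvu : (v : H) = ((‖(v : H)‖ : ℝ) : ℂ) • u := by
    rw [hu_def, smul_smul]
    norm_cast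
    simp [mul_inv_cancel₀ hvnorm]
  have hex : e x = (d * (‖(v : H)‖ : ℂ)) • u := by
    rw [← hd']
    nth_rewrite 1 [hvu]
    rw [smul_smul]
  have hinner : ⟪u, x⟫_ℂ = d * (‖(v : H)‖ : ℂ) := by
    have h1 : ⟪u, x⟫_ℂ = ⟪e u, x⟫_ℂ := by rw [heu]
    have hadj : ContinuousLinearMap.adjoint e = e :=
      ContinuousLinearMap.isSelfAdjoint_iff'.mp he
    have h2 : ⟪e u, x⟫_ℂ = ⟪u, e x⟫_ℂ := by
      conv_rhs => rw [← hadj]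
      rw [ContinuousLinearMap.adjoint_inner_right]
    rw [h1, h2, hex, inner_smul_right]
    have : ⟪u, u⟫_ℂ = 1 := by
      rw [inner_self_eq_norm_sq_to_K, hunorm]; norm_num
    rw [this, mul_one]
  rw [hex, hinner]

/-- For one-dimensional (orthogonal) projections `e` and `f` on a complex
Hilbert space `H`, the trace norm of `e - f` satisfies `‖e - f‖₁ = 2 √(1 - Tr(e f))`.
Here the trace of a (finite-rank) operator is computed as the sum `∑ᵢ ⟪bᵢ, T bᵢ⟫` over a
Hilbert basis `b` of `H`, and `‖a‖₁ = Tr |a|`, where `|a| = cfc |·| a` is the absolute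
value of `a` given by the continuous functional calculus. -/
theorem traceNorm_sub_of_rank_one_projections
    {H : Type*} [NormedAddCommGroup H] [InnerProductSpace ℂ H] [CompleteSpace H]
    {ι : Type*} (b : HilbertBasis ι ℂ H)
    (e f : H →L[ℂ] H)
    (he : IsSelfAdjoint e) (he' : IsIdempotentElem e)
    (hf : IsSelfAdjoint f) (hf' : IsIdempotentElem f)
    (hre : Module.finrank ℂ (LinearMap.range (e : H →ₗ[ℂ] H)) = 1)
    (hrf : Module.finrank ℂ (LinearMap.range (f : H →ₗ[ℂ] H)) = 1) :
    ∑' i, ⟪b i, (cfc (fun t : ℝ => |t|) (e - f)) (b i)⟫_ℂ =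
      ((2 * Real.sqrt (1 - (∑' i, ⟪b i, (e ∘L f) (b i)⟫_ℂ).re) : ℝ) : ℂ) := by
  obtain ⟨u, hu1, hu⟩ := exists_unit_vec e he he' hre
  obtain ⟨v, hv1, hv⟩ := exists_unit_vec f hf hf' hrf
  set c : ℝ := ‖⟪u, v⟫_ℂ‖ ^ 2 with hc_def
  have hc1 : c ≤ 1 := by
    have := norm_inner_le_norm (𝕜 := ℂ) u v
    rw [hu1, hv1, mul_one] at this
    nlinarith [norm_nonneg ⟪u, v⟫_ℂ]
  have hcc : ⟪u, v⟫_ℂ * ⟪v, u⟫_ℂ = (c : ℂ) := by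
    rw [← inner_conj_symm v u, RCLike.mul_conj]
    norm_cast
  set s : ℝ := Real.sqrt (1 - c) with hs_def
  have hs2 : s ^ 2 = 1 - c := Real.sq_sqrt (by linarith)
  have hs0 : 0 ≤ s := Real.sqrt_nonneg _
  set a : H →L[ℂ] H := e - f with ha_def
  have ha : IsSelfAdjoint a := he.sub hf
  have huu : ⟪u, u⟫_ℂ = 1 := by
    rw [inner_self_eq_norm_sq_to_K, hu1]; norm_num
  have hvv : ⟪v, v⟫_ℂ = 1 := by
    rw [inner_self_eq_norm_sq_to_K, hv1]; norm_num
  haveI : Nontrivial H := by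
    refine ⟨u, 0, fun h => ?_⟩
    rw [h, norm_zero] at hu1; norm_num at hu1
  -- a squared
  have hsq : a ^ 2 = e + f - e * f - f * e := by
    rw [sq, ha_def, sub_mul, mul_sub, mul_sub, he'.eq, hf'.eq]
    abel
  -- cubic identity
  have hcube : a ^ 3 = (1 - c : ℝ) • a := by
    have hax : ∀ x, a x = ⟪u, x⟫_ℂ • u - ⟪v, x⟫_ℂ • v := fun x => by
      rw [ha_def]; simp [ContinuousLinearMap.sub_apply, hu, hv]
    ext x
    have h3 : (a ^ 3) x = a (a (a x)) := by
      rw [pow_succ, pow_succ, pow_one, ContinuousLinearMap.mul_apply,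
        ContinuousLinearMap.mul_apply]
    rw [h3, ContinuousLinearMap.smul_apply, ← Complex.coe_smul]
    simp only [hax, inner_sub_right, inner_smul_right, smul_sub, smul_smul, sub_smul, huu, hvv]
    match_scalars
    · linear_combination (-⟪u, x⟫_ℂ) * hcc
    · linear_combination (⟪v, x⟫_ℂ) * hcc
  -- cfc of the cubic vanishes
  have hzero : cfc (fun t : ℝ => t ^ 3 - s ^ 2 * t) a = 0 := by
    have h1 : cfc (fun t : ℝ => t ^ 3 - s ^ 2 * t) a
        = cfc (fun t : ℝ => t ^ 3) a - cfc (fun t : ℝ => s ^ 2 * t) a :=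
      cfc_sub _ _ a (by fun_prop) (by fun_prop)
    rw [h1, cfc_pow_id a 3 ha, cfc_const_mul_id (s ^ 2) a ha, hcube, hs2, sub_self]
  have hsp : ∀ x ∈ spectrum ℝ a, x ^ 3 - s ^ 2 * x = 0 := by
    intro x hx
    have hmap := cfc_map_spectrum (R := ℝ) (f := fun t : ℝ => t ^ 3 - s ^ 2 * t) (a := a)
      ha (by fun_prop)
    rw [hzero] at hmap
    have hmem : (fun t : ℝ => t ^ 3 - s ^ 2 * t) x ∈ spectrum ℝ (0 : H →L[ℂ] H) := by
      rw [hmap]; exact Set.mem_image_of_mem _ hx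
    rw [spectrum.zero_eq] at hmem
    simpa using hmem
  have habs : ∀ x ∈ spectrum ℝ a, |x| = s⁻¹ * x ^ 2 := by
    intro x hx
    have h := hsp x hx
    have h3 : x * ((x - s) * (x + s)) = 0 := by ring_nf; ring_nf at h; linarith
    rcases mul_eq_zero.mp h3 with h4 | h4
    · rw [h4]; simp
    · rcases mul_eq_zero.mp h4 with h5 | h5
      · have hx' : x = s := by linarith
        rcases eq_or_lt_of_le hs0 with h6 | h6
        · rw [hx', ← h6]; simp
        · rw [hx', abs_of_nonneg hs0]; field_simp
      · have hx' : x = -s := by linarith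
        rcases eq_or_lt_of_le hs0 with h6 | h6
        · rw [hx', ← h6]; simp
        · rw [hx', abs_neg, abs_of_nonneg hs0]; field_simp
  have habs_op : cfc (fun t : ℝ => |t|) a = s⁻¹ • a ^ 2 := by
    rw [cfc_congr habs, cfc_const_mul s⁻¹ (fun t : ℝ => t ^ 2) a (by fun_prop), cfc_pow_id a 2]
  -- trace computations
  have hTe : HasSum (fun i => ⟪b i, e (b i)⟫_ℂ) 1 := by
    have hfun : (fun i => ⟪b i, e (b i)⟫_ℂ) = fun i => ⟪u, b i⟫_ℂ * ⟪b i, u⟫_ℂ := by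
      funext i; rw [hu, inner_smul_right]
    have h := b.hasSum_inner_mul_inner u u
    rw [huu] at h
    rw [hfun]; exact h
  have hTf : HasSum (fun i => ⟪b i, f (b i)⟫_ℂ) 1 := by
    have hfun : (fun i => ⟪b i, f (b i)⟫_ℂ) = fun i => ⟪v, b i⟫_ℂ * ⟪b i, v⟫_ℂ := by
      funext i; rw [hv, inner_smul_right]
    have h := b.hasSum_inner_mul_inner v v
    rw [hvv] at h
    rw [hfun]; exact h
  have hTef : HasSum (fun i => ⟪b i, (e * f) (b i)⟫_ℂ) (c : ℂ) := by
    have hfun : (fun i => ⟪b i, (e * f) (b i)⟫_ℂ)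
        = fun i => ⟪u, v⟫_ℂ * (⟪v, b i⟫_ℂ * ⟪b i, u⟫_ℂ) := by
      funext i
      simp only [ContinuousLinearMap.mul_apply, hv, hu, inner_smul_right, smul_smul]
      ring
    rw [hfun, ← hcc]
    exact (b.hasSum_inner_mul_inner v u).mul_left _
  have hTfe : HasSum (fun i => ⟪b i, (f * e) (b i)⟫_ℂ) (c : ℂ) := by
    have hfun : (fun i => ⟪b i, (f * e) (b i)⟫_ℂ)
        = fun i => ⟪v, u⟫_ℂ * (⟪u, b i⟫_ℂ * ⟪b i, v⟫_ℂ) := by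
      funext i
      simp only [ContinuousLinearMap.mul_apply, hu, hv, inner_smul_right, smul_smul]
      ring
    rw [hfun, ← (mul_comm ⟪u, v⟫_ℂ ⟪v, u⟫_ℂ ▸ hcc : ⟪v, u⟫_ℂ * ⟪u, v⟫_ℂ = (c : ℂ))]
    exact (b.hasSum_inner_mul_inner u v).mul_left _
  -- total sum
  have hT : HasSum (fun i => ⟪b i, (cfc (fun t : ℝ => |t|) a) (b i)⟫_ℂ)
      (((s⁻¹ * (2 - 2 * c) : ℝ)) : ℂ) := by
    have h := ((((hTe.add hTf).sub hTef).sub hTfe)).mul_left ((s⁻¹ : ℝ) : ℂ)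
    have hfun : (fun i => ⟪b i, (cfc (fun t : ℝ => |t|) a) (b i)⟫_ℂ)
        = fun i => ((s⁻¹ : ℝ) : ℂ) * (⟪b i, e (b i)⟫_ℂ + ⟪b i, f (b i)⟫_ℂ
            - ⟪b i, (e * f) (b i)⟫_ℂ - ⟪b i, (f * e) (b i)⟫_ℂ) := by
      funext i
      rw [habs_op, hsq]
      simp only [ContinuousLinearMap.smul_apply, ContinuousLinearMap.sub_apply,
        ContinuousLinearMap.add_apply, ← Complex.coe_smul, inner_smul_right,
        inner_sub_right, inner_add_right]
    rw [hfun]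
    convert h using 1
    · rfl
    push_cast; ring
  rw [ha_def] at hT
  rw [hT.tsum_eq, show e ∘L f = e * f from rfl, hTef.tsum_eq]
  have hre' : ((c : ℂ)).re = c := Complex.ofReal_re c
  rw [hre']
  norm_cast
  rcases eq_or_lt_of_le hs0 with h6 | h6
  · have h1c : (1 : ℝ) - c = 0 := by rw [← hs2, ← h6]; ring
    have hc1' : c = 1 := by linarith
    rw [← hs_def, ← h6, hc1']
    norm_num
  · rw [← hs_def]
    have : 2 - 2 * c = 2 * s ^ 2 := by rw [hs2]; ring
    rw [this]
    field_simp
end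

section
/- Let X be a set and let π be a partition of X. Then π covers exactly three atoms in the partition lattice (ordered by refinement) if and only if π = π_K for a three-element subset K ⊆ X, i.e., π has exactly one non-singleton block and that block has exactly three elements. -/
private def pairSetoid {X : Type*} (x y : X) : Setoid X where
  r a b := a = b ∨ (a = x ∧ b = y) ∨ (a = y ∧ b = x)
  iseqv := by
    refine ⟨fun _ => Or.inl rfl, ?_, ?_⟩
    · rintro a b (rfl|⟨h1,h2⟩|⟨h1,h2⟩) <;> subst_vars <;> tauto
    · rintro a b c (rfl|⟨h1,h2⟩|⟨h1,h2⟩) (rfl|⟨h3,h4⟩|⟨h3,h4⟩) <;> subst_vars <;> tauto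

private lemma pairSetoid_apply {X : Type*} (x y a b : X) :
    pairSetoid x y a b ↔ (a = b ∨ (a = x ∧ b = y) ∨ (a = y ∧ b = x)) := Iff.rfl

private lemma pairSetoid_symm {X : Type*} (x y : X) : pairSetoid x y = pairSetoid y x := by
  apply Setoid.ext; intro a b; rw [pairSetoid_apply, pairSetoid_apply]; tauto

private lemma pairSetoid_rel {X : Type*} (x y : X) : pairSetoid x y x y :=
  Or.inr (Or.inl ⟨rfl, rfl⟩)

private lemma pairSetoid_ne_bot {X : Type*} {x y : X} (h : x ≠ y) : pairSetoid x y ≠ ⊥ := by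
  intro hb
  have := pairSetoid_rel x y
  rw [hb] at this
  exact h this

private lemma pairSetoid_le {X : Type*} {x y : X} {b : Setoid X} (h : b x y) :
    pairSetoid x y ≤ b := by
  rw [Setoid.le_def]
  rintro a c (rfl|⟨h1,h2⟩|⟨h1,h2⟩)
  · exact b.refl a
  · subst_vars; exact h
  · subst_vars; exact b.symm h

private lemma nontrivial_pair_of_ne_bot {X : Type*} {b : Setoid X} (h : b ≠ ⊥) :
    ∃ p q, p ≠ q ∧ b p q := by
  by_contra hc
  push_neg at hc
  apply h
  apply Setoid.ext; intro a c
  constructor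
  · intro h'; by_contra hac; exact (hc a c hac) h'
  · rintro rfl; exact b.refl a

private lemma isAtom_pairSetoid {X : Type*} {x y : X} (h : x ≠ y) : IsAtom (pairSetoid x y) := by
  refine ⟨pairSetoid_ne_bot h, ?_⟩
  intro b hb
  by_contra hne
  obtain ⟨p, q, hpq, hbpq⟩ := nontrivial_pair_of_ne_bot hne
  have hle : pairSetoid x y ≤ b := by
    rcases hb.le hbpq with rfl | ⟨h1, h2⟩ | ⟨h1, h2⟩
    · exact absurd rfl hpq
    · exact pairSetoid_le (h1 ▸ h2 ▸ hbpq)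
    · exact (pairSetoid_symm x y) ▸ pairSetoid_le (h1 ▸ h2 ▸ hbpq)
  exact absurd (le_antisymm hb.le hle) hb.ne

private lemma atom_eq_pairSetoid {X : Type*} {α : Setoid X} (h : IsAtom α) :
    ∃ x y : X, x ≠ y ∧ α = pairSetoid x y := by
  obtain ⟨x, y, hxy, hαxy⟩ := nontrivial_pair_of_ne_bot h.1
  refine ⟨x, y, hxy, ?_⟩
  rcases lt_or_eq_of_le (pairSetoid_le hαxy) with hlt | heq
  · exact absurd (h.2 _ hlt) (pairSetoid_ne_bot hxy)
  · exact heq.symm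

private def kSetoid {X : Type*} (K : Set X) : Setoid X where
  r a b := a = b ∨ (a ∈ K ∧ b ∈ K)
  iseqv := ⟨fun _ => Or.inl rfl, by tauto, by rintro a b c (rfl|h) (rfl|h') <;> tauto⟩

private lemma kSetoid_apply {X : Type*} (K : Set X) (a b : X) :
    kSetoid K a b ↔ (a = b ∨ (a ∈ K ∧ b ∈ K)) := Iff.rfl

private lemma kSetoid_le_of {X : Type*} {γ : Setoid X} {x y z : X}
    (hxy : γ x y) (hxz : γ x z) : kSetoid {x, y, z} ≤ γ := by
  have hyz : γ y z := γ.trans (γ.symm hxy) hxz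
  rw [Setoid.le_def]
  rintro a b (rfl | ⟨ha, hb⟩)
  · exact γ.refl a
  · simp only [Set.mem_insert_iff, Set.mem_singleton_iff] at ha hb
    rcases ha with rfl|rfl|rfl <;> rcases hb with rfl|rfl|rfl <;>
      first
        | exact γ.refl _ | exact hxy | exact hxz | exact hyz
        | exact γ.symm hxy | exact γ.symm hxz | exact γ.symm hyz

private lemma exists_pair_not_le {X : Type*} {r s : Setoid X} (h : ¬ r ≤ s) :
    ∃ p q, r p q ∧ ¬ s p q := by
  by_contra hc
  push_neg at hc
  exact h (Setoid.le_def.mpr fun {p q} hpq => hc p q hpq)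

private lemma pair_covBy_kSetoid {X : Type*} {x y z : X}
    (hxy : x ≠ y) (hxz : x ≠ z) (hyz : y ≠ z) :
    pairSetoid x y ⋖ kSetoid {x, y, z} := by
  have hkxy : kSetoid ({x, y, z} : Set X) x y := Or.inr ⟨by simp, by simp⟩
  have hkxz : kSetoid ({x, y, z} : Set X) x z := Or.inr ⟨by simp, by simp⟩
  constructor
  · constructor
    · exact pairSetoid_le hkxy
    · intro hle
      have := Setoid.le_def.mp hle hkxz
      rcases this with rfl | ⟨h1, h2⟩ | ⟨h1, h2⟩
      · exact hxz rfl
      · exact hyz h2.symm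
      · exact hxz h2.symm
  · intro γ h1 h2
    obtain ⟨p, q, hγpq, hnpq⟩ := exists_pair_not_le h1.not_ge
    have hγxy : γ x y := Setoid.le_def.mp h1.le (pairSetoid_rel x y)
    have hk := Setoid.le_def.mp h2.le hγpq
    rcases hk with rfl | ⟨hp, hq⟩
    · exact hnpq (Or.inl rfl)
    · simp only [Set.mem_insert_iff, Set.mem_singleton_iff] at hp hq
      have hle : kSetoid ({x, y, z} : Set X) ≤ γ := by
        rcases hp with rfl|rfl|rfl <;> rcases hq with rfl|rfl|rfl
        · exact absurd (Or.inl rfl) hnpq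
        · exact absurd (Or.inr (Or.inl ⟨rfl, rfl⟩)) hnpq
        · exact kSetoid_le_of hγxy hγpq
        · exact absurd (Or.inr (Or.inr ⟨rfl, rfl⟩)) hnpq
        · exact absurd (Or.inl rfl) hnpq
        · exact kSetoid_le_of hγxy (γ.trans hγxy hγpq)
        · exact kSetoid_le_of hγxy (γ.symm hγpq)
        · exact kSetoid_le_of hγxy (γ.trans hγxy (γ.symm hγpq))
        · exact absurd (Or.inl rfl) hnpq
      exact h2.not_ge hle

private def twoPairSetoid {X : Type*} (x y u v : X)
    (hux : u ≠ x) (huy : u ≠ y) (hvx : v ≠ x) (hvy : v ≠ y) : Setoid X where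
  r a b := a = b ∨ ((a = x ∨ a = y) ∧ (b = x ∨ b = y)) ∨ ((a = u ∨ a = v) ∧ (b = u ∨ b = v))
  iseqv := by
    refine ⟨fun _ => Or.inl rfl, ?_, ?_⟩
    · rintro a b (rfl | ⟨h1, h2⟩ | ⟨h1, h2⟩)
      · exact Or.inl rfl
      · exact Or.inr (Or.inl ⟨h2, h1⟩)
      · exact Or.inr (Or.inr ⟨h2, h1⟩)
    · rintro a b c (rfl | ⟨h1, h2⟩ | ⟨h1, h2⟩) h'
      · exact h'
      · rcases h' with rfl | ⟨h3, h4⟩ | ⟨h3, h4⟩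
        · exact Or.inr (Or.inl ⟨h1, h2⟩)
        · exact Or.inr (Or.inl ⟨h1, h4⟩)
        · exfalso
          rcases h2 with rfl | rfl <;> rcases h3 with h3 | h3
          · exact hux h3.symm
          · exact hvx h3.symm
          · exact huy h3.symm
          · exact hvy h3.symm
      · rcases h' with rfl | ⟨h3, h4⟩ | ⟨h3, h4⟩
        · exact Or.inr (Or.inr ⟨h1, h2⟩)
        · exfalso
          rcases h2 with rfl | rfl <;> rcases h3 with h3 | h3
          · exact hux h3
          · exact huy h3
          · exact hvx h3
          · exact hvy h3
        · exact Or.inr (Or.inr ⟨h1, h4⟩)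

private lemma pairSetoid_mem_pair {X : Type*} {x y p q : X} (hpq : p ≠ q)
    (hp : p = x ∨ p = y) (hq : q = x ∨ q = y) : pairSetoid p q = pairSetoid x y := by
  rcases hp with rfl | rfl <;> rcases hq with rfl | rfl
  · exact absurd rfl hpq
  · rfl
  · exact pairSetoid_symm p q
  · exact absurd rfl hpq

private lemma two_pair_case {X : Type*} {x y u v : X} {π : Setoid X}
    (huv : u ≠ v) (hux : u ≠ x) (huy : u ≠ y) (hvx : v ≠ x) (hvy : v ≠ y)
    (hcov : pairSetoid x y ⋖ π) (h1 : π u v) :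
    {α : Setoid X | IsAtom α ∧ α ⋖ π}.encard ≤ 2 := by
  set σ := twoPairSetoid x y u v hux huy hvx hvy with hσ
  have hσrel : ∀ a b, σ a b ↔
      (a = b ∨ ((a = x ∨ a = y) ∧ (b = x ∨ b = y)) ∨ ((a = u ∨ a = v) ∧ (b = u ∨ b = v))) :=
    fun a b => Iff.rfl
  have hπxy : π x y := Setoid.le_def.mp hcov.lt.le (pairSetoid_rel x y)
  have hσπ : σ = π := by
    have hlt : pairSetoid x y < σ := by
      constructor
      · rw [Setoid.le_def]
        rintro a b (rfl | ⟨rfl, rfl⟩ | ⟨rfl, rfl⟩)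
        · exact σ.refl a
        · exact Or.inr (Or.inl ⟨Or.inl rfl, Or.inr rfl⟩)
        · exact Or.inr (Or.inl ⟨Or.inr rfl, Or.inl rfl⟩)
      · intro hle
        have := Setoid.le_def.mp hle
          (show σ u v from Or.inr (Or.inr ⟨Or.inl rfl, Or.inr rfl⟩))
        rcases this with rfl | ⟨rfl, _⟩ | ⟨rfl, _⟩
        · exact huv rfl
        · exact hux rfl
        · exact huy rfl
    have hle : σ ≤ π := by
      rw [Setoid.le_def]
      rintro a b (rfl | ⟨ha, hb⟩ | ⟨ha, hb⟩)
      · exact π.refl _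
      · rcases ha with rfl | rfl <;> rcases hb with rfl | rfl
        · exact π.refl _
        · exact hπxy
        · exact π.symm hπxy
        · exact π.refl _
      · rcases ha with rfl | rfl <;> rcases hb with rfl | rfl
        · exact π.refl _
        · exact h1
        · exact π.symm h1
        · exact π.refl _
    rcases lt_or_eq_of_le hle with hlt2 | heq
    · exact absurd hlt2 (hcov.2 hlt)
    · exact heq
  have hsub : {α : Setoid X | IsAtom α ∧ α ⋖ π} ⊆ {pairSetoid x y, pairSetoid u v} := by
    rintro α ⟨hatom, hc⟩
    obtain ⟨p, q, hpq, rfl⟩ := atom_eq_pairSetoid hatom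
    have hπpq : π p q := Setoid.le_def.mp hc.lt.le (pairSetoid_rel p q)
    rw [← hσπ] at hπpq
    rcases hπpq with rfl | ⟨hp, hq⟩ | ⟨hp, hq⟩
    · exact absurd rfl hpq
    · exact Or.inl (pairSetoid_mem_pair hpq hp hq)
    · exact Or.inr (pairSetoid_mem_pair hpq hp hq)
  calc ({α : Setoid X | IsAtom α ∧ α ⋖ π}).encard
      ≤ ({pairSetoid x y, pairSetoid u v} : Set (Setoid X)).encard := Set.encard_mono hsub
    _ ≤ 2 := by
        refine le_trans (Set.encard_insert_le _ _) ?_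
        rw [Set.encard_singleton]; norm_num

private lemma pairSetoid_ne {X : Type*} {x y p q : X} (h : ¬ pairSetoid p q x y) :
    pairSetoid x y ≠ pairSetoid p q := by
  intro he
  exact h (he ▸ pairSetoid_rel x y)

private lemma covered_atoms_kSetoid {X : Type*} {x y z : X}
    (hxy : x ≠ y) (hxz : x ≠ z) (hyz : y ≠ z) :
    {α : Setoid X | IsAtom α ∧ α ⋖ kSetoid {x, y, z}} =
      {pairSetoid x y, pairSetoid x z, pairSetoid y z} := by
  have e1 : ({x, y, z} : Set X) = {x, z, y} := by
    ext a; simp only [Set.mem_insert_iff, Set.mem_singleton_iff]; tauto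
  have e2 : ({x, y, z} : Set X) = {y, z, x} := by
    ext a; simp only [Set.mem_insert_iff, Set.mem_singleton_iff]; tauto
  ext α
  simp only [Set.mem_setOf_eq, Set.mem_insert_iff, Set.mem_singleton_iff]
  constructor
  · rintro ⟨hatom, hc⟩
    obtain ⟨p, q, hpq, rfl⟩ := atom_eq_pairSetoid hatom
    have hk : kSetoid ({x, y, z} : Set X) p q :=
      Setoid.le_def.mp hc.lt.le (pairSetoid_rel p q)
    rcases hk with rfl | ⟨hp, hq⟩
    · exact absurd rfl hpq
    · simp only [Set.mem_insert_iff, Set.mem_singleton_iff] at hp hq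
      rcases hp with rfl|rfl|rfl <;> rcases hq with rfl|rfl|rfl
      · exact absurd rfl hpq
      · exact Or.inl rfl
      · exact Or.inr (Or.inl rfl)
      · exact Or.inl (pairSetoid_symm p q)
      · exact absurd rfl hpq
      · exact Or.inr (Or.inr rfl)
      · exact Or.inr (Or.inl (pairSetoid_symm p q))
      · exact Or.inr (Or.inr (pairSetoid_symm p q))
      · exact absurd rfl hpq
  · rintro (rfl | rfl | rfl)
    · exact ⟨isAtom_pairSetoid hxy, pair_covBy_kSetoid hxy hxz hyz⟩
    · exact ⟨isAtom_pairSetoid hxz, e1 ▸ pair_covBy_kSetoid hxz hxy (fun h => hyz h.symm)⟩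
    · exact ⟨isAtom_pairSetoid hyz, e2 ▸ pair_covBy_kSetoid hyz (fun h => hxy h.symm)
        (fun h => hxz h.symm)⟩

/-- A partition `π` of a set `X` covers exactly three atoms in the partition
lattice (ordered by refinement) if and only if `π = π_K` for a three-element subset
`K ⊆ X`, i.e. `π` has exactly one non-singleton block and that block has exactly three
elements. -/
theorem covers_three_atoms_iff {X : Type*} (π : Setoid X) :
    {α : Setoid X | IsAtom α ∧ α ⋖ π}.encard = 3 ↔
      ∃ x y z : X, x ≠ y ∧ x ≠ z ∧ y ≠ z ∧
        ∀ a b : X, π a b ↔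
          (a = b ∨ (a ∈ ({x, y, z} : Set X) ∧ b ∈ ({x, y, z} : Set X))) := by
  constructor
  · intro hS
    have hne : {α : Setoid X | IsAtom α ∧ α ⋖ π}.Nonempty := by
      rw [Set.nonempty_iff_ne_empty]
      intro h
      rw [h, Set.encard_empty] at hS
      norm_num at hS
    obtain ⟨α, hatom, hcov⟩ := hne
    obtain ⟨x, y, hxy, rfl⟩ := atom_eq_pairSetoid hatom
    have hπxy : π x y := Setoid.le_def.mp hcov.lt.le (pairSetoid_rel x y)
    obtain ⟨u, v, hπuv, hnuv⟩ := exists_pair_not_le hcov.lt.not_ge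
    rw [pairSetoid_apply] at hnuv
    push_neg at hnuv
    obtain ⟨huv, hn1, hn2⟩ := hnuv
    -- helper to conclude in the "shared element" case
    have finish : ∀ t : X, t ≠ x → t ≠ y → π x t →
        ∃ x' y' z' : X, x' ≠ y' ∧ x' ≠ z' ∧ y' ≠ z' ∧
          ∀ a b : X, π a b ↔
            (a = b ∨ (a ∈ ({x', y', z'} : Set X) ∧ b ∈ ({x', y', z'} : Set X))) := by
      intro t htx hty hπxt
      refine ⟨x, y, t, hxy, fun h => htx h.symm, fun h => hty h.symm, ?_⟩
      have hle : kSetoid ({x, y, t} : Set X) ≤ π := kSetoid_le_of hπxy hπxt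
      have hlt : pairSetoid x y < kSetoid ({x, y, t} : Set X) := by
        constructor
        · exact pairSetoid_le (Or.inr ⟨by simp, by simp⟩)
        · intro hle'
          have := Setoid.le_def.mp hle'
            (show kSetoid ({x, y, t} : Set X) x t from Or.inr ⟨by simp, by simp⟩)
          rcases this with h | ⟨_, h2⟩ | ⟨h1, _⟩
          · exact htx h.symm
          · exact hty h2
          · exact hxy h1
      have heq : kSetoid ({x, y, t} : Set X) = π := by
        rcases lt_or_eq_of_le hle with hlt2 | heq
        · exact absurd hlt2 (hcov.2 hlt)
        · exact heq
      intro a b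
      rw [← heq]
      exact Iff.rfl
    by_cases hux : u = x
    · subst hux
      exact finish v (fun h => huv h.symm) (hn1 rfl) hπuv
    by_cases huy : u = y
    · subst huy
      exact finish v (hn2 rfl) (fun h => huv h.symm) (π.trans hπxy hπuv)
    by_cases hvx : v = x
    · subst hvx
      exact finish u huv huy (π.symm hπuv)
    by_cases hvy : v = y
    · subst hvy
      exact finish u hux huv (π.trans hπxy (π.symm hπuv))
    · exfalso
      have := two_pair_case huv hux huy hvx hvy hcov hπuv
      rw [hS] at this
      norm_num at this
  · rintro ⟨x, y, z, hxy, hxz, hyz, hπ⟩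
    have hπk : π = kSetoid {x, y, z} := by
      apply Setoid.ext
      intro a b
      rw [hπ a b, kSetoid_apply]
    rw [hπk, covered_atoms_kSetoid hxy hxz hyz]
    rw [Set.encard_eq_three]
    refine ⟨_, _, _, ?_, ?_, ?_, rfl⟩
    · apply pairSetoid_ne
      rw [pairSetoid_apply]
      push_neg
      exact ⟨hxy, fun _ => hyz, fun h => absurd h hxz⟩
    · apply pairSetoid_ne
      rw [pairSetoid_apply]
      push_neg
      exact ⟨hxy, fun h => absurd h hxy, fun h => absurd h hxz⟩
    · apply pairSetoid_ne
      rw [pairSetoid_apply]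
      push_neg
      exact ⟨hxz, fun h => absurd h hxy, fun _ => fun h => hyz h.symm⟩
end

section
/- Let X be a set with at least two elements. A partition π of X has at most one non-singleton block if and only if: π is an atom, or π covers exactly three atoms, or whenever α ≠ β are atoms below π, there exists an atom γ ≤ π such that α ∨ γ covers three distinct atoms and β ∨ γ covers three distinct atoms. -/
namespace AMOB

variable {X : Type*}

def pairS (x y : X) : Setoid X :=
  ⟨fun a b => a = b ∨ (a = x ∧ b = y) ∨ (a = y ∧ b = x),
   ⟨fun _ => Or.inl rfl,
    by rintro a b (rfl | ⟨rfl, rfl⟩ | ⟨rfl, rfl⟩) <;> tauto,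
    by
      rintro a b c (rfl | ⟨rfl, rfl⟩ | ⟨rfl, rfl⟩) h2 <;>
        rcases h2 with h2 | ⟨h2a, h2b⟩ | ⟨h2a, h2b⟩ <;> tauto⟩⟩

lemma pairS_iff {x y a b : X} :
    pairS x y a b ↔ a = b ∨ (a = x ∧ b = y) ∨ (a = y ∧ b = x) := Iff.rfl

lemma pairS_self (x y : X) : pairS x y x y := Or.inr (Or.inl ⟨rfl, rfl⟩)

lemma pairS_comm (x y : X) : pairS x y = pairS y x := by
  apply Setoid.ext; intro a b
  constructor <;> (rintro (rfl | ⟨rfl, rfl⟩ | ⟨rfl, rfl⟩) <;> tauto)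

lemma pairS_le {x y : X} {π : Setoid X} : pairS x y ≤ π ↔ π x y := by
  constructor
  · intro h; exact h (pairS_self x y)
  · rintro h a b (rfl | ⟨rfl, rfl⟩ | ⟨rfl, rfl⟩)
    · exact Setoid.refl' π _
    · exact h
    · exact Setoid.symm' π h

lemma pairS_ne_bot {x y : X} (h : x ≠ y) : pairS x y ≠ ⊥ := by
  intro hb
  have : (⊥ : Setoid X) x y := hb ▸ pairS_self x y
  exact h this

lemma isAtom_pairS {x y : X} (h : x ≠ y) : IsAtom (pairS x y) := by
  refine ⟨pairS_ne_bot h, fun b hb => ?_⟩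
  by_cases hxy : b x y
  · exfalso
    have hle : pairS x y ≤ b := by
      rintro a c (rfl | ⟨rfl, rfl⟩ | ⟨rfl, rfl⟩)
      · exact Setoid.refl' b _
      · exact hxy
      · exact Setoid.symm' b hxy
    exact (not_le_of_gt hb) hle
  · apply le_antisymm _ bot_le
    intro a c hac
    rcases hb.le hac with rfl | ⟨rfl, rfl⟩ | ⟨rfl, rfl⟩
    · exact rfl
    · exact absurd hac hxy
    · exact absurd (Setoid.symm' b hac) hxy

lemma atom_eq_pairS {α : Setoid X} (h : IsAtom α) : ∃ x y, x ≠ y ∧ α = pairS x y := by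
  have hne : ¬ α ≤ ⊥ := fun hle => h.1 (le_antisymm hle bot_le)
  have hex : ∃ x y, α x y ∧ x ≠ y := by
    by_contra hc
    push_neg at hc
    exact hne fun a b hab => hc a b hab
  obtain ⟨x, y, hxy, hne'⟩ := hex
  have hle : pairS x y ≤ α := pairS_le.mpr hxy
  refine ⟨x, y, hne', ?_⟩
  rcases eq_or_lt_of_le hle with heq | hlt
  · exact heq.symm
  · exact absurd (h.2 _ hlt) (pairS_ne_bot hne')

lemma pairS_inj {x y u v : X} (hxy : x ≠ y) (h : pairS x y = pairS u v) :
    (x = u ∧ y = v) ∨ (x = v ∧ y = u) := by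
  have h2 : pairS u v x y := h ▸ pairS_self x y
  rcases h2 with heq | h1 | h1
  · exact absurd heq hxy
  · exact Or.inl h1
  · exact Or.inr h1

def tripleS (x y z : X) : Setoid X :=
  ⟨fun a b => a = b ∨ ((a = x ∨ a = y ∨ a = z) ∧ (b = x ∨ b = y ∨ b = z)),
   ⟨fun _ => Or.inl rfl,
    by rintro a b (rfl | ⟨h1, h2⟩) <;> tauto,
    by rintro a b c (rfl | ⟨h1, h2⟩) (rfl | ⟨h3, h4⟩) <;> tauto⟩⟩

lemma tripleS_iff {x y z a b : X} :
    tripleS x y z a b ↔ a = b ∨ ((a = x ∨ a = y ∨ a = z) ∧ (b = x ∨ b = y ∨ b = z)) := Iff.rfl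

lemma sup_pair_pair {x y z : X} (hxy : x ≠ y) (hyz : y ≠ z) (hxz : x ≠ z) :
    pairS x y ⊔ pairS y z = tripleS x y z := by
  apply le_antisymm
  · apply sup_le
    · rintro a b (rfl | ⟨rfl, rfl⟩ | ⟨rfl, rfl⟩) <;>
        first | exact Setoid.refl' _ _ | exact Or.inr ⟨by tauto, by tauto⟩
    · rintro a b (rfl | ⟨rfl, rfl⟩ | ⟨rfl, rfl⟩) <;>
        first | exact Setoid.refl' _ _ | exact Or.inr ⟨by tauto, by tauto⟩
  · set σ := pairS x y ⊔ pairS y z with hσ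
    have h1 : σ x y := (le_sup_left : pairS x y ≤ σ) (pairS_self x y)
    have h2 : σ y z := (le_sup_right : pairS y z ≤ σ) (pairS_self y z)
    have h3 : σ x z := Setoid.trans' σ h1 h2
    rintro a b (rfl | ⟨(rfl | rfl | rfl), (rfl | rfl | rfl)⟩)
    all_goals first
      | exact Setoid.refl' σ _
      | exact h1 | exact h2 | exact h3
      | exact Setoid.symm' σ h1 | exact Setoid.symm' σ h2 | exact Setoid.symm' σ h3

def ofSet (S : Set X) : Setoid X :=
  ⟨fun a b => a = b ∨ (a ∈ S ∧ b ∈ S),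
   ⟨fun _ => Or.inl rfl,
    by rintro a b (rfl | ⟨h1, h2⟩) <;> tauto,
    by rintro a b c (rfl | ⟨h1, h2⟩) (rfl | ⟨h3, h4⟩) <;> tauto⟩⟩

def ofTwo (S T : Set X) (h : ∀ z, z ∈ S → z ∈ T → False) : Setoid X :=
  ⟨fun a b => a = b ∨ (a ∈ S ∧ b ∈ S) ∨ (a ∈ T ∧ b ∈ T),
   ⟨fun _ => Or.inl rfl,
    by rintro a b (rfl | ⟨h1, h2⟩ | ⟨h1, h2⟩) <;> tauto,
    by
      rintro a b c (rfl | ⟨h1, h2⟩ | ⟨h1, h2⟩) hbc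
      · exact hbc
      · rcases hbc with rfl | ⟨h3, h4⟩ | ⟨h3, h4⟩
        · exact Or.inr (Or.inl ⟨h1, h2⟩)
        · exact Or.inr (Or.inl ⟨h1, h4⟩)
        · exact (h _ h2 h3).elim
      · rcases hbc with rfl | ⟨h3, h4⟩ | ⟨h3, h4⟩
        · exact Or.inr (Or.inr ⟨h1, h2⟩)
        · exact (h _ h3 h2).elim
        · exact Or.inr (Or.inr ⟨h1, h4⟩)⟩⟩

lemma eq_sup_of_covby {δ π : Setoid X} (h : δ ⋖ π) {u v : X} (huv : π u v) (hne : u ≠ v)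
    (hδ : ¬ δ u v) : π = δ ⊔ pairS u v := by
  have hlt : δ < δ ⊔ pairS u v := by
    refine lt_of_le_of_ne le_sup_left fun heq => hδ ?_
    have h2 : (δ ⊔ pairS u v) u v := (le_sup_right : pairS u v ≤ _) (pairS_self u v)
    rw [← heq] at h2; exact h2
  have hle : δ ⊔ pairS u v ≤ π := sup_le h.le (pairS_le.mpr huv)
  rcases hle.lt_or_eq with hlt2 | heq
  · exact absurd hlt2 (h.2 hlt)
  · exact heq.symm

lemma pair_covby_triple {x y z u v : X} (hxy : x ≠ y) (hyz : y ≠ z) (hxz : x ≠ z)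
    (hu : u = x ∨ u = y ∨ u = z) (hv : v = x ∨ v = y ∨ v = z) (huv : u ≠ v) :
    pairS u v ⋖ tripleS x y z := by
  constructor
  · refine lt_of_le_of_ne ?_ ?_
    · rintro a b (rfl | ⟨rfl, rfl⟩ | ⟨rfl, rfl⟩)
      · exact Setoid.refl' _ _
      · exact Or.inr ⟨hu, hv⟩
      · exact Or.inr ⟨hv, hu⟩
    · intro heq
      have e1 : pairS u v x y := heq ▸ (Or.inr ⟨Or.inl rfl, Or.inr (Or.inl rfl)⟩ :
        tripleS x y z x y)
      have e2 : pairS u v y z := heq ▸ (Or.inr ⟨Or.inr (Or.inl rfl), Or.inr (Or.inr rfl)⟩ :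
        tripleS x y z y z)
      rcases e1 with h | ⟨rfl, rfl⟩ | ⟨rfl, rfl⟩ <;>
        rcases e2 with h' | ⟨h2a, h2b⟩ | ⟨h2a, h2b⟩ <;> subst_vars <;> simp_all
  · intro σ h1 h2
    obtain ⟨w, hwu, hwv, hall⟩ :
        ∃ w, w ≠ u ∧ w ≠ v ∧ ∀ r, (r = x ∨ r = y ∨ r = z) → r = u ∨ r = v ∨ r = w := by
      rcases hu with rfl | rfl | rfl <;> rcases hv with rfl | rfl | rfl <;>
        first
          | exact absurd rfl huv
          | exact ⟨z, by aesop, by aesop, by aesop⟩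
          | exact ⟨y, by aesop, by aesop, by aesop⟩
          | exact ⟨x, by aesop, by aesop, by aesop⟩
    obtain ⟨s, t, hst, hnst⟩ : ∃ s t, σ s t ∧ ¬ pairS u v s t := by
      by_contra hc; push_neg at hc
      exact h1.not_ge fun s t hh => hc s t hh
    have hstne : s ≠ t := fun h => hnst (Or.inl h)
    have hsin : s = x ∨ s = y ∨ s = z := by
      rcases h2.le hst with h | ⟨h1', h2'⟩
      · exact absurd h hstne
      · exact h1'
    have htin : t = x ∨ t = y ∨ t = z := by
      rcases h2.le hst with h | ⟨h1', h2'⟩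
      · exact absurd h hstne
      · exact h2'
    have hσuv : σ u v := h1.le (pairS_self u v)
    have hwor : σ w u ∨ σ w v := by
      rcases hall s hsin with rfl | rfl | rfl <;> rcases hall t htin with rfl | rfl | rfl
      · exact absurd rfl hstne
      · exact absurd (Or.inr (Or.inl ⟨rfl, rfl⟩)) hnst
      · exact Or.inl (Setoid.symm' σ hst)
      · exact absurd (Or.inr (Or.inr ⟨rfl, rfl⟩)) hnst
      · exact absurd rfl hstne
      · exact Or.inr (Setoid.symm' σ hst)
      · exact Or.inl hst
      · exact Or.inr hst
      · exact absurd rfl hstne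
    have hσwu : σ w u := by
      rcases hwor with h | h
      · exact h
      · exact Setoid.trans' σ h (Setoid.symm' σ hσuv)
    have hσwv : σ w v := Setoid.trans' σ hσwu hσuv
    have htle : tripleS x y z ≤ σ := by
      rintro a b (rfl | ⟨ha, hb⟩)
      · exact Setoid.refl' σ _
      · rcases hall a ha with rfl | rfl | rfl <;> rcases hall b hb with rfl | rfl | rfl
        all_goals first
          | exact Setoid.refl' σ _
          | exact hσuv | exact Setoid.symm' σ hσuv
          | exact hσwu | exact hσwv
          | exact Setoid.symm' σ hσwu | exact Setoid.symm' σ hσwv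
    exact h2.ne (le_antisymm h2.le htle)

lemma triple_cover_atoms {x y z : X} (hxy : x ≠ y) (hyz : y ≠ z) (hxz : x ≠ z) :
    {δ : Setoid X | IsAtom δ ∧ δ ⋖ tripleS x y z} = {pairS x y, pairS y z, pairS x z} := by
  ext δ
  simp only [Set.mem_setOf_eq, Set.mem_insert_iff, Set.mem_singleton_iff]
  constructor
  · rintro ⟨ha, hc⟩
    obtain ⟨u, v, huv, rfl⟩ := atom_eq_pairS ha
    have hle := hc.le (pairS_self u v)
    rcases hle with heq | ⟨hu, hv⟩
    · exact absurd heq huv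
    · rcases hu with rfl | rfl | rfl <;> rcases hv with rfl | rfl | rfl
      · exact absurd rfl huv
      · exact Or.inl rfl
      · exact Or.inr (Or.inr rfl)
      · exact Or.inl (pairS_comm _ _)
      · exact absurd rfl huv
      · exact Or.inr (Or.inl rfl)
      · exact Or.inr (Or.inr (pairS_comm _ _))
      · exact Or.inr (Or.inl (pairS_comm _ _))
      · exact absurd rfl huv
  · rintro (rfl | rfl | rfl)
    · exact ⟨isAtom_pairS hxy, pair_covby_triple hxy hyz hxz (Or.inl rfl)
        (Or.inr (Or.inl rfl)) hxy⟩
    · exact ⟨isAtom_pairS hyz, pair_covby_triple hxy hyz hxz (Or.inr (Or.inl rfl))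
        (Or.inr (Or.inr rfl)) hyz⟩
    · exact ⟨isAtom_pairS hxz, pair_covby_triple hxy hyz hxz (Or.inl rfl)
        (Or.inr (Or.inr rfl)) hxz⟩

lemma triple_encard {x y z : X} (hxy : x ≠ y) (hyz : y ≠ z) (hxz : x ≠ z) :
    {δ : Setoid X | IsAtom δ ∧ δ ⋖ tripleS x y z}.encard = 3 := by
  rw [triple_cover_atoms hxy hyz hxz]
  have d1 : pairS x y ≠ pairS y z := by
    intro h
    rcases pairS_inj hxy h with ⟨h1, h2⟩ | ⟨h1, h2⟩
    · exact hxy h1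
    · exact hxz h1
  have d2 : pairS x y ≠ pairS x z := by
    intro h
    rcases pairS_inj hxy h with ⟨h1, h2⟩ | ⟨h1, h2⟩
    · exact hyz h2
    · exact hxz h1
  have d3 : pairS y z ≠ pairS x z := by
    intro h
    rcases pairS_inj hyz h with ⟨h1, h2⟩ | ⟨h1, h2⟩
    · exact hxy h1.symm
    · exact hyz h1
  rw [Set.encard_eq_three]
  exact ⟨_, _, _, d1, d2, d3, rfl⟩

lemma encard_le_two_of_subset_pair {S : Set (Setoid X)} {α γ : Setoid X}
    (h : S ⊆ {α, γ}) : S.encard ≤ 2 := by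
  refine (Set.encard_mono h).trans ?_
  refine (Set.encard_insert_le _ _).trans ?_
  rw [Set.encard_singleton]
  norm_num

lemma inter_of_encard3 {a b p q : X} (hab : a ≠ b) (hpq : p ≠ q)
    (h : {δ : Setoid X | IsAtom δ ∧ δ ⋖ pairS a b ⊔ pairS p q}.encard = 3) :
    p = a ∨ p = b ∨ q = a ∨ q = b := by
  by_contra hc
  push_neg at hc
  obtain ⟨h1, h2, h3, h4⟩ := hc
  have hdisj : ∀ z, z ∈ ({a, b} : Set X) → z ∈ ({p, q} : Set X) → False := by
    intro z hz1 hz2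
    simp only [Set.mem_insert_iff, Set.mem_singleton_iff] at hz1 hz2
    rcases hz1 with rfl | rfl <;> rcases hz2 with rfl | rfl
    · exact h1 rfl
    · exact h3 rfl
    · exact h2 rfl
    · exact h4 rfl
  have hub : pairS a b ⊔ pairS p q ≤ ofTwo {a, b} {p, q} hdisj := by
    apply sup_le
    · rintro s t (rfl | ⟨rfl, rfl⟩ | ⟨rfl, rfl⟩)
      · exact Or.inl rfl
      · exact Or.inr (Or.inl ⟨by simp, by simp⟩)
      · exact Or.inr (Or.inl ⟨by simp, by simp⟩)
    · rintro s t (rfl | ⟨rfl, rfl⟩ | ⟨rfl, rfl⟩)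
      · exact Or.inl rfl
      · exact Or.inr (Or.inr ⟨by simp, by simp⟩)
      · exact Or.inr (Or.inr ⟨by simp, by simp⟩)
  have hsub : {δ : Setoid X | IsAtom δ ∧ δ ⋖ pairS a b ⊔ pairS p q} ⊆
      {pairS a b, pairS p q} := by
    rintro δ ⟨hδa, hδc⟩
    obtain ⟨x, y, hxy, rfl⟩ := atom_eq_pairS hδa
    have hrel := hub (hδc.le (pairS_self x y))
    simp only [Set.mem_insert_iff, Set.mem_singleton_iff]
    rcases hrel with heq | ⟨hx, hy⟩ | ⟨hx, hy⟩
    · exact absurd heq hxy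
    · simp only [Set.mem_insert_iff, Set.mem_singleton_iff] at hx hy
      left
      rcases hx with rfl | rfl <;> rcases hy with rfl | rfl
      · exact absurd rfl hxy
      · rfl
      · exact pairS_comm _ _
      · exact absurd rfl hxy
    · simp only [Set.mem_insert_iff, Set.mem_singleton_iff] at hx hy
      right
      rcases hx with rfl | rfl <;> rcases hy with rfl | rfl
      · exact absurd rfl hxy
      · rfl
      · exact pairS_comm _ _
      · exact absurd rfl hxy
  have := (encard_le_two_of_subset_pair hsub)
  rw [h] at this
  norm_num at this

lemma shared_case {π : Setoid X} {p u v : X} (hpu : p ≠ u) (hpv : p ≠ v) (huv : u ≠ v)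
    (h1 : π p u) (h2 : π p v) :
    ∃ γ : Setoid X, IsAtom γ ∧ γ ≤ π ∧
      {δ : Setoid X | IsAtom δ ∧ δ ⋖ pairS p u ⊔ γ}.encard = 3 ∧
      {δ : Setoid X | IsAtom δ ∧ δ ⋖ pairS p v ⊔ γ}.encard = 3 := by
  refine ⟨pairS u v, isAtom_pairS huv,
    pairS_le.mpr (Setoid.trans' π (Setoid.symm' π h1) h2), ?_, ?_⟩
  · rw [sup_pair_pair hpu huv hpv]
    exact triple_encard hpu huv hpv
  · rw [pairS_comm u v, sup_pair_pair hpv (Ne.symm huv) hpu]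
    exact triple_encard hpv (Ne.symm huv) hpu

end AMOB

open AMOB

/-- Let `X` be a set with at least two elements. A partition `π` of `X` has at
most one non-singleton block if and only if: `π` is an atom in the partition lattice
(ordered by refinement), or `π` covers exactly three atoms, or whenever `α ≠ β` are atoms
below `π` there exists an atom `γ ≤ π` such that `α ⊔ γ` covers exactly three distinct
atoms and `β ⊔ γ` covers exactly three distinct atoms. -/
theorem at_most_one_nonsingleton_block_iff {X : Type*} (hX : ∃ x y : X, x ≠ y)
    (π : Setoid X) :
    (∀ a b c d : X, π a b → π c d → a ≠ b → c ≠ d → π a c) ↔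
      (IsAtom π ∨
        {δ : Setoid X | IsAtom δ ∧ δ ⋖ π}.encard = 3 ∨
        (∀ α β : Setoid X, IsAtom α → IsAtom β → α ≠ β → α ≤ π → β ≤ π →
          ∃ γ : Setoid X, IsAtom γ ∧ γ ≤ π ∧
            {δ : Setoid X | IsAtom δ ∧ δ ⋖ α ⊔ γ}.encard = 3 ∧
            {δ : Setoid X | IsAtom δ ∧ δ ⋖ β ⊔ γ}.encard = 3)) := by
  constructor
  · intro H
    right; right
    intro α β hα hβ hαβ hαπ hβπ
    obtain ⟨a, b, hab, rfl⟩ := atom_eq_pairS hα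
    obtain ⟨c, d, hcd, rfl⟩ := atom_eq_pairS hβ
    have hπab : π a b := hαπ (pairS_self a b)
    have hπcd : π c d := hβπ (pairS_self c d)
    have hπac : π a c := H a b c d hπab hπcd hab hcd
    have hπad : π a d := Setoid.trans' π hπac hπcd
    have hπbc : π b c := Setoid.trans' π (Setoid.symm' π hπab) hπac
    have hπbd : π b d := Setoid.trans' π hπbc hπcd
    by_cases h1 : a = c
    · subst h1
      have hbd : b ≠ d := fun h => hαβ (by rw [h])
      exact shared_case hab hcd hbd hπab hπcd
    · by_cases h2 : a = d
      · subst h2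
        have hbc : b ≠ c := by
          intro h; subst h
          exact hαβ (pairS_comm a b)
        rw [show pairS c a = pairS a c from pairS_comm c a]
        exact shared_case hab (Ne.symm hcd) hbc hπab (Setoid.symm' π hπcd)
      · by_cases h3 : b = c
        · subst h3
          have hsame : a ≠ d := h2
          rw [show pairS a b = pairS b a from pairS_comm a b]
          exact shared_case (Ne.symm hab) hcd h2 (Setoid.symm' π hπab) hπcd
        · by_cases h4 : b = d
          · subst h4
            rw [show pairS a b = pairS b a from pairS_comm a b,
              show pairS c b = pairS b c from pairS_comm c b]
            exact shared_case (Ne.symm hab) (Ne.symm hcd) h1 (Setoid.symm' π hπab)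
              (Setoid.symm' π hπcd)
          · -- disjoint case : γ = pairS b c
            refine ⟨pairS b c, isAtom_pairS h3, pairS_le.mpr hπbc, ?_, ?_⟩
            · rw [sup_pair_pair hab h3 h1]
              exact triple_encard hab h3 h1
            · rw [pairS_comm c d, pairS_comm b c,
                sup_pair_pair (Ne.symm hcd) (fun h => h3 h.symm) (fun h => h4 h.symm)]
              exact triple_encard (Ne.symm hcd) (fun h => h3 h.symm) (fun h => h4 h.symm)
  · intro H a b c d hab hcd hnab hncd
    by_contra hac
    have had : ¬ π a d := fun h => hac (Setoid.trans' π h (Setoid.symm' π hcd))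
    have hbc : ¬ π b c := fun h => hac (Setoid.trans' π hab h)
    have hbd : ¬ π b d := fun h =>
      hac (Setoid.trans' π hab (Setoid.trans' π h (Setoid.symm' π hcd)))
    have hnac : a ≠ c := fun h => hac (h ▸ Setoid.refl' π a)
    have hnad : a ≠ d := fun h => had (h ▸ Setoid.refl' π a)
    have hnbc : b ≠ c := fun h => hbc (h ▸ Setoid.refl' π b)
    have hnbd : b ≠ d := fun h => hbd (h ▸ Setoid.refl' π b)
    rcases H with hAtom | hEnc | hThird
    · obtain ⟨x, y, hxy, rfl⟩ := atom_eq_pairS hAtom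
      rcases hab with h | ⟨rfl, rfl⟩ | ⟨rfl, rfl⟩ <;>
        rcases hcd with h' | ⟨h1, h2⟩ | ⟨h1, h2⟩ <;> simp_all
    · have hsub : {δ : Setoid X | IsAtom δ ∧ δ ⋖ π} ⊆ {pairS a b, pairS c d} := by
        rintro δ ⟨hδa, hδc⟩
        obtain ⟨x, y, hxy, rfl⟩ := atom_eq_pairS hδa
        simp only [Set.mem_insert_iff, Set.mem_singleton_iff]
        by_contra hmem
        push_neg at hmem
        obtain ⟨hm1, hm2⟩ := hmem
        have hnd : ¬ pairS x y a b := by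
          rintro (h | ⟨rfl, rfl⟩ | ⟨rfl, rfl⟩)
          · exact hnab h
          · exact hm1 rfl
          · exact hm1 (pairS_comm _ _)
        have hπeq := eq_sup_of_covby hδc hab hnab hnd
        have hub : π ≤ ofSet {x, y, a, b} := by
          rw [hπeq]
          apply sup_le
          · rintro s t (rfl | ⟨rfl, rfl⟩ | ⟨rfl, rfl⟩)
            · exact Or.inl rfl
            · exact Or.inr ⟨by simp, by simp⟩
            · exact Or.inr ⟨by simp, by simp⟩
          · rintro s t (rfl | ⟨rfl, rfl⟩ | ⟨rfl, rfl⟩)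
            · exact Or.inl rfl
            · exact Or.inr ⟨by simp, by simp⟩
            · exact Or.inr ⟨by simp, by simp⟩
        have hrel := hub hcd
        rcases hrel with h | ⟨hcS, hdS⟩
        · exact hncd h
        · simp only [Set.mem_insert_iff, Set.mem_singleton_iff] at hcS hdS
          have hcx : c = x ∨ c = y := by
            rcases hcS with h | h | h | h
            · exact Or.inl h
            · exact Or.inr h
            · exact absurd h.symm hnac
            · exact absurd h.symm hnbc
          have hdx : d = x ∨ d = y := by
            rcases hdS with h | h | h | h
            · exact Or.inl h
            · exact Or.inr h
            · exact absurd h.symm hnad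
            · exact absurd h.symm hnbd
          rcases hcx with rfl | rfl <;> rcases hdx with rfl | rfl
          · exact hncd rfl
          · exact hm2 rfl
          · exact hm2 (pairS_comm _ _)
          · exact hncd rfl
      have hle := encard_le_two_of_subset_pair hsub
      rw [hEnc] at hle
      norm_num at hle
    · have hαβ : pairS a b ≠ pairS c d := by
        intro h
        rcases pairS_inj hnab h with ⟨h1, h2⟩ | ⟨h1, h2⟩
        · exact hnac h1
        · exact hnad h1
      obtain ⟨γ, hγa, hγπ, he1, he2⟩ := hThird (pairS a b) (pairS c d) (isAtom_pairS hnab)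
        (isAtom_pairS hncd) hαβ (pairS_le.mpr hab) (pairS_le.mpr hcd)
      obtain ⟨p, q, hpq, rfl⟩ := atom_eq_pairS hγa
      have hπpq : π p q := hγπ (pairS_self p q)
      have hint1 := inter_of_encard3 hnab hpq he1
      have hint2 := inter_of_encard3 hncd hpq he2
      have hπap : π a p := by
        rcases hint1 with rfl | rfl | rfl | rfl
        · exact Setoid.refl' π _
        · exact hab
        · exact Setoid.symm' π hπpq
        · exact Setoid.trans' π hab (Setoid.symm' π hπpq)
      have hπcp : π c p := by
        rcases hint2 with rfl | rfl | rfl | rfl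
        · exact Setoid.refl' π _
        · exact hcd
        · exact Setoid.symm' π hπpq
        · exact Setoid.trans' π hcd (Setoid.symm' π hπpq)
      exact hac (Setoid.trans' π hπap (Setoid.symm' π hπcp))
end

section
/- Let X and Y be finite sets with |X| = |Y| = n > 2, and let F be an order isomorphism between the posets of subsets of X (resp. Y) of cardinality at least two, ordered by inclusion. Then there exists a unique bijection φ : X → Y such that F(S) = φ[S] for every subset S of X with at least two elements. -/
open Finset
set_option linter.unusedSectionVars false

section aux

variable {X Y : Type*} [DecidableEq X] [DecidableEq Y]

private lemma sub_le_iff {S T : {S : Finset X // 2 ≤ S.card}} :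
    S ≤ T ↔ (S : Finset X) ⊆ (T : Finset X) := Iff.rfl

private lemma F_un (F : {S : Finset X // 2 ≤ S.card} ≃o {S : Finset Y // 2 ≤ S.card})
    (S T U : {S : Finset X // 2 ≤ S.card}) (hU : (U : Finset X) = (S : Finset X) ∪ (T : Finset X)) :
    (F U : Finset Y) = (F S : Finset Y) ∪ (F T : Finset Y) := by
  have hc : 2 ≤ ((F S : Finset Y) ∪ (F T : Finset Y)).card :=
    le_trans (F S).2 (card_le_card subset_union_left)
  set W : {S : Finset Y // 2 ≤ S.card} := ⟨(F S : Finset Y) ∪ (F T : Finset Y), hc⟩ with hW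
  apply subset_antisymm
  · have h1 : S ≤ F.symm W := by
      rw [← F.le_iff_le, F.apply_symm_apply]
      exact sub_le_iff.mpr subset_union_left
    have h2 : T ≤ F.symm W := by
      rw [← F.le_iff_le, F.apply_symm_apply]
      exact sub_le_iff.mpr subset_union_right
    have h3 : U ≤ F.symm W := by
      rw [sub_le_iff, hU]
      exact union_subset (sub_le_iff.mp h1) (sub_le_iff.mp h2)
    have h4 := F.monotone h3
    rw [F.apply_symm_apply] at h4
    exact sub_le_iff.mp h4
  · apply union_subset
    · exact sub_le_iff.mp (F.monotone (sub_le_iff.mpr (by rw [hU]; exact subset_union_left)))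
    · exact sub_le_iff.mp (F.monotone (sub_le_iff.mpr (by rw [hU]; exact subset_union_right)))

private lemma F_card_two (F : {S : Finset X // 2 ≤ S.card} ≃o {S : Finset Y // 2 ≤ S.card})
    (S : {S : Finset X // 2 ≤ S.card}) (h : (S : Finset X).card = 2) :
    (F S : Finset Y).card = 2 := by
  by_contra hne
  have h3 : 3 ≤ (F S : Finset Y).card := by have := (F S).2; omega
  obtain ⟨T, hT, hTc⟩ := Finset.exists_subset_card_eq (s := (F S : Finset Y)) (n := 2) (by omega)
  have hT2 : 2 ≤ T.card := le_of_eq hTc.symm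
  have hle : F.symm ⟨T, hT2⟩ ≤ S := by
    have h5 : (⟨T, hT2⟩ : {S : Finset Y // 2 ≤ S.card}) ≤ F S := sub_le_iff.mpr hT
    have := F.symm.monotone h5
    rwa [F.symm_apply_apply] at this
  have heq : (F.symm ⟨T, hT2⟩ : Finset X) = (S : Finset X) :=
    Finset.eq_of_subset_of_card_le (sub_le_iff.mp hle) (by rw [h]; exact (F.symm ⟨T, hT2⟩).2)
  have : F.symm ⟨T, hT2⟩ = S := Subtype.ext heq
  have : (⟨T, hT2⟩ : {S : Finset Y // 2 ≤ S.card}) = F S := by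
    rw [← this, F.apply_symm_apply]
  have : T = (F S : Finset Y) := congrArg Subtype.val this
  rw [this] at hTc; omega


private lemma choose_two_lt {a b : ℕ} (ha : 1 ≤ a) (h : a < b) : a.choose 2 < b.choose 2 := by
  induction b with
  | zero => omega
  | succ m ih =>
    have hm : (m + 1).choose 2 = m.choose 1 + m.choose 2 := Nat.choose_succ_succ m 1
    rw [hm, Nat.choose_one_right]
    rcases Nat.lt_or_ge a m with h' | h'
    · have := ih h'; omega
    · have : a = m := by omega
      subst this; omega

private lemma F_card (F : {S : Finset X // 2 ≤ S.card} ≃o {S : Finset Y // 2 ≤ S.card})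
    (S : {S : Finset X // 2 ≤ S.card}) : (F S : Finset Y).card = (S : Finset X).card := by
  have key : ((S : Finset X).powersetCard 2).card = ((F S : Finset Y).powersetCard 2).card := by
    apply Finset.card_bij
      (fun T hT => (F ⟨T, le_of_eq (mem_powersetCard.mp hT).2.symm⟩ : Finset Y))
    · intro T hT
      obtain ⟨hsub, hc⟩ := mem_powersetCard.mp hT
      refine mem_powersetCard.mpr ⟨?_, ?_⟩
      · exact sub_le_iff.mp (F.monotone (sub_le_iff.mpr hsub))
      · exact F_card_two F _ hc
    · intro T1 h1 T2 h2 heq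
      have := F.injective (Subtype.ext heq)
      exact congrArg Subtype.val this
    · intro U hU
      obtain ⟨hsub, hc⟩ := mem_powersetCard.mp hU
      have hU2 : 2 ≤ U.card := le_of_eq hc.symm
      refine ⟨(F.symm ⟨U, hU2⟩ : Finset X), ?_, ?_⟩
      · refine mem_powersetCard.mpr ⟨?_, ?_⟩
        · have h5 : (⟨U, hU2⟩ : {S : Finset Y // 2 ≤ S.card}) ≤ F S := sub_le_iff.mpr hsub
          have := F.symm.monotone h5
          rw [F.symm_apply_apply] at this
          exact sub_le_iff.mp this
        · exact F_card_two F.symm _ hc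
      · rw [Subtype.coe_eta, F.apply_symm_apply]
  rw [Finset.card_powersetCard, Finset.card_powersetCard] at key
  by_contra hne
  have h1 : 2 ≤ (S : Finset X).card := S.2
  have h2 : 2 ≤ (F S : Finset Y).card := (F S).2
  rcases Nat.lt_or_ge (S : Finset X).card (F S : Finset Y).card with h' | h'
  · have := choose_two_lt (by omega) h'; omega
  · have h'' : (F S : Finset Y).card < (S : Finset X).card := by omega
    have := choose_two_lt (by omega) h''; omega

private lemma F_inter_card (F : {S : Finset X // 2 ≤ S.card} ≃o {S : Finset Y // 2 ≤ S.card})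
    (P Q : {S : Finset X // 2 ≤ S.card}) (hP : (P : Finset X).card = 2)
    (hQ : (Q : Finset X).card = 2)
    (hU3 : ((P : Finset X) ∪ (Q : Finset X)).card = 3) :
    ((F P : Finset Y) ∩ (F Q : Finset Y)).card = 1 := by
  have h2 : 2 ≤ ((P : Finset X) ∪ (Q : Finset X)).card := by omega
  have hu := F_un F P Q ⟨(P : Finset X) ∪ (Q : Finset X), h2⟩ rfl
  have hcu : ((F P : Finset Y) ∪ (F Q : Finset Y)).card = 3 := by
    rw [← hu, F_card]; exact hU3
  have hie := Finset.card_union_add_card_inter (F P : Finset Y) (F Q : Finset Y)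
  rw [hcu, F_card_two F P hP, F_card_two F Q hQ] at hie
  omega


private lemma star_lemma {X Y : Type*} [Fintype X] [DecidableEq X] [DecidableEq Y]
    (hX3 : 3 ≤ Fintype.card X)
    (F : {S : Finset X // 2 ≤ S.card} ≃o {S : Finset Y // 2 ≤ S.card}) (x : X) :
    ∃ y : Y, ∀ P : {S : Finset X // 2 ≤ S.card},
      x ∈ (P : Finset X) → (P : Finset X).card = 2 → y ∈ (F P : Finset Y) := by
  have hcs : 1 < (Finset.univ.erase x : Finset X).card := by
    rw [card_erase_of_mem (mem_univ x), card_univ]; omega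
  obtain ⟨a₀, ha₀, a₁, ha₁, hab⟩ := Finset.one_lt_card.mp hcs
  have h0x : a₀ ≠ x := (mem_erase.mp ha₀).1
  have h1x : a₁ ≠ x := (mem_erase.mp ha₁).1
  have c0 : ({x, a₀} : Finset X).card = 2 := card_pair (Ne.symm h0x)
  have c1 : ({x, a₁} : Finset X).card = 2 := card_pair (Ne.symm h1x)
  set P₀ : {S : Finset X // 2 ≤ S.card} := ⟨{x, a₀}, le_of_eq c0.symm⟩ with hP₀
  set P₁ : {S : Finset X // 2 ≤ S.card} := ⟨{x, a₁}, le_of_eq c1.symm⟩ with hP₁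
  have hu01 : (P₀ : Finset X) ∪ (P₁ : Finset X) = {x, a₀, a₁} := by
    ext z; simp [hP₀, hP₁]; try tauto
  have c01 : ((P₀ : Finset X) ∪ (P₁ : Finset X)).card = 3 := by
    rw [hu01, card_insert_of_notMem (by
      simp only [mem_insert, mem_singleton]; push_neg
      exact ⟨Ne.symm h0x, Ne.symm h1x⟩), card_pair hab]
  have hi01 := F_inter_card F P₀ P₁ c0 c1 c01
  obtain ⟨y, hy⟩ := card_eq_one.mp hi01
  have hy0 : y ∈ (F P₀ : Finset Y) := (mem_inter.mp (hy ▸ mem_singleton_self y)).1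
  have hy1 : y ∈ (F P₁ : Finset Y) := (mem_inter.mp (hy ▸ mem_singleton_self y)).2
  refine ⟨y, ?_⟩
  intro P hxP hP2
  -- write P = {x, a}
  have he : ((P : Finset X).erase x).card = 1 := by
    rw [card_erase_of_mem hxP, hP2]
  obtain ⟨a, ha⟩ := card_eq_one.mp he
  have hamem : a ∈ (P : Finset X).erase x := by rw [ha]; exact mem_singleton_self a
  have hax : a ≠ x := (mem_erase.mp hamem).1
  have hPa : (P : Finset X) = {x, a} := by
    rw [← insert_erase hxP, ha]
  by_cases h0 : a = a₀
  · have : P = P₀ := Subtype.ext (by rw [hPa, h0]; try rfl)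
    rw [this]; exact hy0
  by_cases h1 : a = a₁
  · have : P = P₁ := Subtype.ext (by rw [hPa, h1]; try rfl)
    rw [this]; exact hy1
  by_contra hyP
  -- intersections with P₀ and P₁
  have cu0 : ((P : Finset X) ∪ (P₀ : Finset X)).card = 3 := by
    have : (P : Finset X) ∪ (P₀ : Finset X) = {x, a, a₀} := by
      ext z; simp [hPa, hP₀]; try tauto
    rw [this, card_insert_of_notMem (by
      simp only [mem_insert, mem_singleton]; push_neg
      exact ⟨Ne.symm hax, Ne.symm h0x⟩), card_pair h0]
  have cu1 : ((P : Finset X) ∪ (P₁ : Finset X)).card = 3 := by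
    have : (P : Finset X) ∪ (P₁ : Finset X) = {x, a, a₁} := by
      ext z; simp [hPa, hP₁]; try tauto
    rw [this, card_insert_of_notMem (by
      simp only [mem_insert, mem_singleton]; push_neg
      exact ⟨Ne.symm hax, Ne.symm h1x⟩), card_pair h1]
  obtain ⟨u, hu⟩ := card_eq_one.mp (F_inter_card F P P₀ hP2 c0 cu0)
  obtain ⟨v, hv⟩ := card_eq_one.mp (F_inter_card F P P₁ hP2 c1 cu1)
  have huP : u ∈ (F P : Finset Y) := (mem_inter.mp (hu ▸ mem_singleton_self u)).1
  have hu0 : u ∈ (F P₀ : Finset Y) := (mem_inter.mp (hu ▸ mem_singleton_self u)).2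
  have hvP : v ∈ (F P : Finset Y) := (mem_inter.mp (hv ▸ mem_singleton_self v)).1
  have hv1 : v ∈ (F P₁ : Finset Y) := (mem_inter.mp (hv ▸ mem_singleton_self v)).2
  have huy : u ≠ y := fun h => hyP (h ▸ huP)
  have hvy : v ≠ y := fun h => hyP (h ▸ hvP)
  have huv : u ≠ v := by
    intro h
    have : u ∈ (F P₀ : Finset Y) ∩ (F P₁ : Finset Y) := mem_inter.mpr ⟨hu0, h ▸ hv1⟩
    rw [hy, mem_singleton] at this
    exact huy this
  have hFP0 : (F P₀ : Finset Y) = {y, u} := by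
    refine (Finset.eq_of_subset_of_card_le ?_ ?_).symm
    · intro z hz; rcases mem_insert.mp hz with h | h
      · rw [h]; exact hy0
      · rw [mem_singleton.mp h]; exact hu0
    · rw [F_card_two F P₀ c0, card_pair (Ne.symm huy)]
  have hFP1 : (F P₁ : Finset Y) = {y, v} := by
    refine (Finset.eq_of_subset_of_card_le ?_ ?_).symm
    · intro z hz; rcases mem_insert.mp hz with h | h
      · rw [h]; exact hy1
      · rw [mem_singleton.mp h]; exact hv1
    · rw [F_card_two F P₁ c1, card_pair (Ne.symm hvy)]
  have hFP : (F P : Finset Y) = {u, v} := by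
    refine (Finset.eq_of_subset_of_card_le ?_ ?_).symm
    · intro z hz; rcases mem_insert.mp hz with h | h
      · rw [h]; exact huP
      · rw [mem_singleton.mp h]; exact hvP
    · rw [F_card_two F P hP2, card_pair huv]
  -- big union
  have c4 : ({x, a, a₀, a₁} : Finset X).card = 4 := by
    rw [card_insert_of_notMem (by
      simp only [mem_insert, mem_singleton]; push_neg
      exact ⟨Ne.symm hax, Ne.symm h0x, Ne.symm h1x⟩),
      card_insert_of_notMem (by
      simp only [mem_insert, mem_singleton]; push_neg
      exact ⟨h0, h1⟩), card_pair hab]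
  set R : {S : Finset X // 2 ≤ S.card} :=
    ⟨(P₀ : Finset X) ∪ (P₁ : Finset X), le_trans P₀.2 (card_le_card subset_union_left)⟩ with hR
  set Q : {S : Finset X // 2 ≤ S.card} := ⟨{x, a, a₀, a₁}, by omega⟩ with hQ
  have hQval : (Q : Finset X) = (P : Finset X) ∪ (R : Finset X) := by
    ext z; simp [hQ, hR, hP₀, hP₁, hPa]; try tauto
  have hFQ : (F Q : Finset Y) = (F P : Finset Y) ∪ ((F P₀ : Finset Y) ∪ (F P₁ : Finset Y)) := by
    rw [F_un F P R Q hQval, F_un F P₀ P₁ R rfl]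
  have hsub3 : (F Q : Finset Y) ⊆ {u, v, y} := by
    rw [hFQ, hFP, hFP0, hFP1]
    intro z hz
    simp only [mem_union, mem_insert, mem_singleton] at hz ⊢
    tauto
  have hle3 : ({u, v, y} : Finset Y).card ≤ 3 :=
    le_trans (card_insert_le _ _) (Nat.succ_le_succ
      (le_trans (card_insert_le _ _) (Nat.succ_le_succ (le_of_eq (card_singleton y)))))
  have : (F Q : Finset Y).card = 4 := by rw [F_card]; exact c4
  have := card_le_card hsub3
  omega

end aux

/-- Let `X` and `Y` be finite sets with `|X| = |Y| = n > 2`, and let `F` be an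
order isomorphism between the posets `F₂(X)` and `F₂(Y)` of subsets of cardinality at least
two, ordered by inclusion. Then there exists a unique bijection `φ : X → Y` such that
`F(S) = φ[S]` for every subset `S` of `X` with at least two elements. -/
theorem orderIso_finset_two_induced_by_unique_bijection
    {X Y : Type*} [Fintype X] [Fintype Y] [DecidableEq Y] (n : ℕ)
    (hX : Fintype.card X = n) (hY : Fintype.card Y = n) (hn : 2 < n)
    (F : {S : Finset X // 2 ≤ S.card} ≃o {S : Finset Y // 2 ≤ S.card}) :
    ∃! φ : X ≃ Y, ∀ S : {S : Finset X // 2 ≤ S.card},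
      ((F S : Finset Y) = (S : Finset X).image φ) := by
  classical
  have hX3 : 3 ≤ Fintype.card X := by omega
  choose g hg using fun x => star_lemma hX3 F x
  -- g x belongs to the image of any pair containing x
  have hgpair : ∀ (x a : X) (h : a ≠ x),
      g x ∈ (F ⟨{x, a}, le_of_eq (card_pair (Ne.symm h)).symm⟩ : Finset Y) :=
    fun x a h => hg x _ (mem_insert_self x _) (card_pair (Ne.symm h))
  have hgpair' : ∀ (x a : X) (h : a ≠ x),
      g a ∈ (F ⟨{x, a}, le_of_eq (card_pair (Ne.symm h)).symm⟩ : Finset Y) :=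
    fun x a h => hg a _ (mem_insert_of_mem (mem_singleton_self a)) (card_pair (Ne.symm h))
  -- injectivity of g
  have hginj : Function.Injective g := by
    intro x x' hxx'
    by_contra hne
    have hx'x : x' ≠ x := fun h => hne h.symm
    have hpos : 0 < ((Finset.univ.erase x).erase x').card := by
      rw [card_erase_of_mem (mem_erase.mpr ⟨hx'x, mem_univ x'⟩),
        card_erase_of_mem (mem_univ x), card_univ]
      omega
    obtain ⟨c, hc⟩ := card_pos.mp hpos
    have hcx' : c ≠ x' := (mem_erase.mp hc).1
    have hcx : c ≠ x := (mem_erase.mp (mem_erase.mp hc).2).1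
    set Pxx' : {S : Finset X // 2 ≤ S.card} :=
      ⟨{x, x'}, le_of_eq (card_pair (Ne.symm hx'x)).symm⟩ with hPxx'
    set Pxc : {S : Finset X // 2 ≤ S.card} :=
      ⟨{x, c}, le_of_eq (card_pair (Ne.symm hcx)).symm⟩ with hPxc
    set Px'c : {S : Finset X // 2 ≤ S.card} :=
      ⟨{x', c}, le_of_eq (card_pair (Ne.symm hcx')).symm⟩ with hPx'c
    have hy1 : g x ∈ (F Pxx' : Finset Y) := hgpair x x' hx'x
    have hy2 : g x ∈ (F Pxc : Finset Y) := hgpair x c hcx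
    have hy3 : g x ∈ (F Px'c : Finset Y) := hxx' ▸ hgpair x' c hcx'
    -- Q = {x, x', c}
    set Q : {S : Finset X // 2 ≤ S.card} := ⟨{x, x', c}, by
      refine le_trans (le_of_eq (card_pair (Ne.symm hx'x)).symm) (card_le_card ?_)
      intro z hz; simp only [mem_insert, mem_singleton] at hz ⊢; tauto⟩ with hQ
    have hQval : (Q : Finset X) = (Pxc : Finset X) ∪ (Px'c : Finset X) := by
      ext z; simp [hQ, hPxc, hPx'c]; try tauto
    have hFQ : (F Q : Finset Y) = (F Pxc : Finset Y) ∪ (F Px'c : Finset Y) :=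
      F_un F Pxc Px'c Q hQval
    -- t : second element of F Pxx'
    have hc2 : (F Pxx' : Finset Y).card = 2 := F_card_two F Pxx' (card_pair (Ne.symm hx'x))
    have het : ((F Pxx' : Finset Y).erase (g x)).card = 1 := by
      rw [card_erase_of_mem hy1, hc2]
    obtain ⟨t, ht⟩ := card_eq_one.mp het
    have htmem : t ∈ (F Pxx' : Finset Y).erase (g x) := by
      rw [ht]; exact mem_singleton_self t
    have hty : t ≠ g x := (mem_erase.mp htmem).1
    have htP : t ∈ (F Pxx' : Finset Y) := (mem_erase.mp htmem).2
    have hPsubQ : F Pxx' ≤ F Q := F.monotone (by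
      rw [sub_le_iff]
      intro z hz; simp only [hPxx', hQ, mem_insert, mem_singleton] at hz ⊢; tauto)
    have htQ : t ∈ (F Q : Finset Y) := sub_le_iff.mp hPsubQ htP
    rw [hFQ, mem_union] at htQ
    have key : ∀ (P' : {S : Finset X // 2 ≤ S.card}), (P' : Finset X).card = 2 →
        g x ∈ (F P' : Finset Y) → t ∈ (F P' : Finset Y) → P' = Pxx' := by
      intro P' hP'2 hgx ht'
      have hsub : ({g x, t} : Finset Y) ⊆ (F P' : Finset Y) := by
        intro z hz; rcases mem_insert.mp hz with h | h
        · rw [h]; exact hgx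
        · rw [mem_singleton.mp h]; exact ht'
      have heq1 : (F P' : Finset Y) = {g x, t} :=
        (Finset.eq_of_subset_of_card_le hsub (by
          rw [F_card_two F P' hP'2, card_pair (fun h => hty h.symm)])).symm
      have heq2 : (F Pxx' : Finset Y) = {g x, t} :=
        (Finset.eq_of_subset_of_card_le (by
          intro z hz; rcases mem_insert.mp hz with h | h
          · rw [h]; exact hy1
          · rw [mem_singleton.mp h]; exact htP) (by
          rw [hc2, card_pair (fun h => hty h.symm)])).symm
      exact F.injective (Subtype.ext (heq1.trans heq2.symm))
    rcases htQ with h | h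
    · have := key Pxc (card_pair (Ne.symm hcx)) hy2 h
      have hval : (Pxc : Finset X) = (Pxx' : Finset X) := congrArg Subtype.val this
      have hcm : c ∈ (Pxx' : Finset X) := by
        rw [← hval]; simp [hPxc]
      simp only [hPxx', mem_insert, mem_singleton] at hcm
      tauto
    · have := key Px'c (card_pair (Ne.symm hcx')) hy3 h
      have hval : (Px'c : Finset X) = (Pxx' : Finset X) := congrArg Subtype.val this
      have hcm : c ∈ (Pxx' : Finset X) := by
        rw [← hval]; simp [hPx'c]
      simp only [hPxx', mem_insert, mem_singleton] at hcm
      tauto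
  have hgbij : Function.Bijective g :=
    (Fintype.bijective_iff_injective_and_card g).mpr ⟨hginj, hX.trans hY.symm⟩
  set φ : X ≃ Y := Equiv.ofBijective g hgbij with hφ
  have hφg : ⇑φ = g := rfl
  -- main image property
  have himg : ∀ S : {S : Finset X // 2 ≤ S.card},
      (F S : Finset Y) = (S : Finset X).image g := by
    intro S
    have hsub : (S : Finset X).image g ⊆ (F S : Finset Y) := by
      intro y hy
      obtain ⟨s, hs, rfl⟩ := mem_image.mp hy
      obtain ⟨s', hs', hss'⟩ := exists_mem_ne (show 1 < (S : Finset X).card by have := S.2; omega) s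
      have hle : (⟨{s, s'}, le_of_eq (card_pair (Ne.symm hss')).symm⟩ :
          {S : Finset X // 2 ≤ S.card}) ≤ S := by
        rw [sub_le_iff]
        exact insert_subset hs (singleton_subset_iff.mpr hs')
      exact sub_le_iff.mp (F.monotone hle) (hgpair s s' hss')
    refine (Finset.eq_of_subset_of_card_le hsub ?_).symm
    rw [F_card, Finset.card_image_of_injective _ hginj]
  refine ⟨φ, ?_, ?_⟩
  · intro S; rw [himg S, hφg]
  · intro ψ hψ
    apply Equiv.ext
    intro x
    have hpos : 1 < (Finset.univ.erase x).card := by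
      rw [card_erase_of_mem (mem_univ x), card_univ]; omega
    obtain ⟨a, ha, b, hb, hab⟩ := Finset.one_lt_card.mp hpos
    have hax : a ≠ x := (mem_erase.mp ha).1
    have hbx : b ≠ x := (mem_erase.mp hb).1
    have hima : ({x, a} : Finset X).image ψ = ({x, a} : Finset X).image g := by
      rw [← hψ ⟨{x, a}, le_of_eq (card_pair (Ne.symm hax)).symm⟩, himg]
    have himb : ({x, b} : Finset X).image ψ = ({x, b} : Finset X).image g := by
      rw [← hψ ⟨{x, b}, le_of_eq (card_pair (Ne.symm hbx)).symm⟩, himg]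
    have hga : g x ∈ ({x, a} : Finset X).image ψ := by
      rw [hima]; exact mem_image_of_mem g (mem_insert_self x _)
    have hgb : g x ∈ ({x, b} : Finset X).image ψ := by
      rw [himb]; exact mem_image_of_mem g (mem_insert_self x _)
    simp only [image_insert, image_singleton, mem_insert, mem_singleton] at hga hgb
    show ψ x = φ x
    rw [hφg]
    rcases hga with h | h
    · exact h.symm
    · rcases hgb with h' | h'
      · exact h'.symm
      · exact absurd (ψ.injective (h.symm.trans h')) hab
end

section
/- Let X and Y be compact Hausdorff spaces each with at least two points, and let F : F₂(X) → F₂(Y) be an order isomorphism between the posets of closed subsets with at least two elements, ordered by inclusion. Then there exists a homeomorphism φ : X → Y such that F(K) = φ[K] for all K ∈ F₂(X); moreover φ is unique if X has at least three points. -/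
set_option maxHeartbeats 1000000

open Set

namespace F2Aux

section pairs
variable {α : Type*}

lemma pair_left_cancel {x y z : α} (h : ({x, y} : Set α) = {x, z}) (hxy : x ≠ y) : y = z := by
  have hy : y ∈ ({x, z} : Set α) := h ▸ (by simp)
  rcases hy with hy | hy
  · exact absurd hy.symm hxy
  · exact hy

lemma nt_subset_pair {s : Set α} (h : s.Nontrivial) {p q : α} (hs : s ⊆ {p, q}) :
    s = {p, q} := by
  obtain ⟨a, ha, b, hb, hab⟩ := h
  apply subset_antisymm hs
  have ha' := hs ha; have hb' := hs hb
  simp only [Set.mem_insert_iff, Set.mem_singleton_iff] at ha' hb'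
  rcases ha' with rfl | rfl <;> rcases hb' with rfl | rfl <;>
    simp_all [Set.insert_subset_iff]

lemma doubleton_of_two_mem {s : Set α} (hd : ∃ a b, a ≠ b ∧ s = {a, b}) {p q : α}
    (hp : p ∈ s) (hq : q ∈ s) (hpq : p ≠ q) : s = {p, q} := by
  obtain ⟨a, b, hab, rfl⟩ := hd
  exact (nt_subset_pair ⟨p, by simp, q, by simp, hpq⟩
    (Set.insert_subset hp (Set.singleton_subset_iff.2 hq))).symm

lemma doubleton_mem {s : Set α} (hd : ∃ a b, a ≠ b ∧ s = {a, b}) {c : α} (hc : c ∈ s) :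
    ∃ r, r ≠ c ∧ s = {c, r} := by
  obtain ⟨a, b, hab, rfl⟩ := hd
  rcases hc with rfl | hc
  · exact ⟨b, hab.symm, rfl⟩
  · rcases hc with rfl
    exact ⟨a, hab, Set.pair_comm a c⟩

lemma pair_subset_triple {u v a b c : α} (huv : u ≠ v)
    (hu : u ∈ ({a, b, c} : Set α)) (hv : v ∈ ({a, b, c} : Set α)) :
    ({u, v} : Set α) = {a, b} ∨ ({u, v} : Set α) = {a, c} ∨ ({u, v} : Set α) = {b, c} := by
  simp only [Set.mem_insert_iff, Set.mem_singleton_iff] at hu hv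
  rcases hu with rfl | rfl | rfl <;> rcases hv with rfl | rfl | rfl <;>
    first
      | exact absurd rfl huv
      | exact Or.inl rfl
      | exact Or.inl (Set.pair_comm _ _)
      | exact Or.inr (Or.inl rfl)
      | exact Or.inr (Or.inl (Set.pair_comm _ _))
      | exact Or.inr (Or.inr rfl)
      | exact Or.inr (Or.inr (Set.pair_comm _ _))

lemma third_point (h : ∃ a b c : α, a ≠ b ∧ a ≠ c ∧ b ≠ c) (u v : α) :
    ∃ w, w ≠ u ∧ w ≠ v := by
  obtain ⟨a, b, c, h1, h2, h3⟩ := h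
  by_contra hw
  push_neg at hw
  have ha := Classical.byCases (fun hx : a = u => Or.inl hx) (fun hx => Or.inr (hw a hx))
  have hb := Classical.byCases (fun hx : b = u => Or.inl hx) (fun hx => Or.inr (hw b hx))
  have hc := Classical.byCases (fun hx : c = u => Or.inl hx) (fun hx => Or.inr (hw c hx))
  rcases ha with rfl | rfl <;> rcases hb with rfl | rfl <;> rcases hc with rfl | rfl <;>
    simp_all

end pairs

/-- The poset of closed nontrivial subsets. -/
abbrev P (X : Type*) [TopologicalSpace X] := {K : Set X // IsClosed K ∧ K.Nontrivial}

section basic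
variable {X Y : Type*} [TopologicalSpace X] [T2Space X] [TopologicalSpace Y] [T2Space Y]

/-- The doubleton element of `P X`. -/
def pr (x y : X) (h : x ≠ y) : P X :=
  ⟨{x, y}, ((Set.finite_singleton y).insert x).isClosed, ⟨x, by simp, y, by simp, h⟩⟩

@[simp] lemma pr_val (x y : X) (h : x ≠ y) : (pr x y h).1 = {x, y} := rfl

lemma pr_comm (x y : X) (h : x ≠ y) : pr y x h.symm = pr x y h :=
  Subtype.ext (Set.pair_comm y x)

/-- The union element of `P X`. -/
def un (A B : P X) : P X :=
  ⟨A.1 ∪ B.1, A.2.1.union B.2.1, A.2.2.mono subset_union_left⟩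

@[simp] lemma un_val (A B : P X) : (un A B).1 = A.1 ∪ B.1 := rfl

lemma le_iff_subset {A B : P X} : A ≤ B ↔ A.1 ⊆ B.1 := Iff.rfl

lemma F_un (F : P X ≃o P Y) (A B : P X) :
    (F (un A B)).1 = (F A).1 ∪ (F B).1 := by
  apply subset_antisymm
  · have h1 : A ≤ F.symm (un (F A) (F B)) :=
      F.le_symm_apply.2 (le_iff_subset.2 subset_union_left)
    have h2 : B ≤ F.symm (un (F A) (F B)) :=
      F.le_symm_apply.2 (le_iff_subset.2 subset_union_right)
    have : un A B ≤ F.symm (un (F A) (F B)) :=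
      le_iff_subset.2 (Set.union_subset (le_iff_subset.1 h1) (le_iff_subset.1 h2))
    exact le_iff_subset.1 (F.le_symm_apply.1 this)
  · apply Set.union_subset
    · exact le_iff_subset.1 (F.monotone (le_iff_subset.2 subset_union_left))
    · exact le_iff_subset.1 (F.monotone (le_iff_subset.2 subset_union_right))

lemma exists_proper {K : Set X} (hK : IsClosed K) {x y z : X} (hx : x ∈ K) (hy : y ∈ K)
    (hz : z ∈ K) (hxy : x ≠ y) (hxz : x ≠ z) (hyz : y ≠ z) :
    ∃ C : Set X, IsClosed C ∧ C.Nontrivial ∧ C ⊆ K ∧ x ∈ C ∧ y ∈ C ∧ z ∉ C := by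
  obtain ⟨U, V, hU, hV, hxU, hzV, hUV⟩ := t2_separation hxz
  obtain ⟨U', V', hU', hV', hyU', hzV', hUV'⟩ := t2_separation hyz
  refine ⟨K ∩ (V ∩ V')ᶜ, hK.inter (hV.inter hV').isClosed_compl,
    ⟨x, ⟨hx, fun hmem => hUV.ne_of_mem hxU hmem.1 rfl⟩,
     y, ⟨hy, fun hmem => hUV'.ne_of_mem hyU' hmem.2 rfl⟩, hxy⟩,
    Set.inter_subset_left,
    ⟨hx, fun hmem => hUV.ne_of_mem hxU hmem.1 rfl⟩,
    ⟨hy, fun hmem => hUV'.ne_of_mem hyU' hmem.2 rfl⟩, fun hmem => hmem.2 ⟨hzV, hzV'⟩⟩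

lemma image_doubleton (F : P X ≃o P Y) {x y : X} (h : x ≠ y) :
    ∃ p q : Y, p ≠ q ∧ (F (pr x y h)).1 = {p, q} := by
  obtain ⟨p, hp, q, hq, hpq⟩ := (F (pr x y h)).2.2
  refine ⟨p, q, hpq, subset_antisymm ?_
    (Set.insert_subset hp (Set.singleton_subset_iff.2 hq))⟩
  intro r hr
  by_contra hrpq
  simp only [Set.mem_insert_iff, Set.mem_singleton_iff, not_or] at hrpq
  obtain ⟨C, hC, hCnt, hCsub, hpC, hqC, hrC⟩ :=
    exists_proper (F (pr x y h)).2.1 hp hq hr hpq (fun hh => hrpq.1 hh.symm)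
      (fun hh => hrpq.2 hh.symm)
  set Cel : P Y := ⟨C, hC, hCnt⟩ with hCel
  have hle : F.symm Cel ≤ pr x y h := by
    have : Cel ≤ F (pr x y h) := le_iff_subset.2 hCsub
    have h2 := F.symm.monotone this
    rwa [F.symm_apply_apply] at h2
  obtain ⟨a, ha, b, hb, hab⟩ := (F.symm Cel).2.2
  have haxy : a ∈ ({x, y} : Set X) := le_iff_subset.1 hle ha
  have hbxy : b ∈ ({x, y} : Set X) := le_iff_subset.1 hle hb
  have hsub2 : ({x, y} : Set X) ⊆ (F.symm Cel).1 := by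
    rcases haxy with rfl | haxy <;> rcases hbxy with rfl | hbxy <;>
      simp_all [Set.insert_subset_iff]
  have heq : F.symm Cel = pr x y h :=
    le_antisymm hle (le_iff_subset.2 hsub2)
  have hCeq : Cel = F (pr x y h) := by rw [← heq, F.apply_symm_apply]
  have hCeq' : C = (F (pr x y h)).1 := congrArg Subtype.val hCeq
  exact hrC (hCeq'.symm ▸ hr)

lemma inner (F : P X ≃o P Y) {x y z : X} (hxy : x ≠ y) (hxz : x ≠ z) (hyz : y ≠ z)
    {p q t : Y} (hpq : p ≠ q) (hFxy : (F (pr x y hxy)).1 = {p, q})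
    (hp : p ∉ (F (pr x z hxz)).1) (hq : q ∉ (F (pr x z hxz)).1)
    (ht : t ∈ (F (pr x z hxz)).1) :
    (F (pr y z hyz)).1 = {p, t} := by
  have hpt : p ≠ t := fun h => hp (h ▸ ht)
  set Q := un (pr x y hxy) (pr x z hxz) with hQdef
  have hQ : (F Q).1 = (F (pr x y hxy)).1 ∪ (F (pr x z hxz)).1 := F_un F _ _
  have hTle : pr p t hpt ≤ F Q := by
    rw [le_iff_subset, pr_val, hQ]
    intro a ha
    rcases ha with rfl | ha
    · exact Or.inl (by rw [hFxy]; simp)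
    · rcases ha with rfl
      exact Or.inr ht
  set D := F.symm (pr p t hpt) with hD
  have hDle : D ≤ Q := by
    have h2 := F.symm.monotone hTle
    rwa [F.symm_apply_apply] at h2
  obtain ⟨a, ha, b, hb, hab⟩ := D.2.2
  have haQ := le_iff_subset.1 hDle ha
  have hbQ := le_iff_subset.1 hDle hb
  simp only [hQdef, un_val, pr_val, Set.mem_union, Set.mem_insert_iff,
    Set.mem_singleton_iff] at haQ hbQ
  have hpab : pr a b hab ≤ D := by
    rw [le_iff_subset, pr_val]
    exact Set.insert_subset ha (Set.singleton_subset_iff.2 hb)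
  have hFab : (F (pr a b hab)).1 = {p, t} := by
    have h1 : F (pr a b hab) ≤ pr p t hpt := by
      have h2 := F.monotone hpab
      rwa [hD, F.apply_symm_apply] at h2
    exact nt_subset_pair (F (pr a b hab)).2.2 (le_iff_subset.1 h1)
  have key : ∀ (u v : X) (huv : u ≠ v), ({u, v} : Set X) = {a, b} →
      (F (pr u v huv)).1 = {p, t} := by
    intro u v huv hset
    rw [show pr u v huv = pr a b hab from Subtype.ext hset, hFab]
  have ha3 : a = x ∨ a = y ∨ a = z := by tauto
  have hb3 : b = x ∨ b = y ∨ b = z := by tauto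
  have contra_xy : ({x, y} : Set X) = {a, b} → False := by
    intro hset
    have h1 : ({p, q} : Set Y) = {p, t} := hFxy.symm.trans (key x y hxy hset)
    exact hq ((pair_left_cancel h1 hpq) ▸ ht)
  have contra_xz : ({x, z} : Set X) = {a, b} → False := by
    intro hset
    have h1 : p ∈ (F (pr x z hxz)).1 := by rw [key x z hxz hset]; simp
    exact hp h1
  rcases ha3 with rfl | rfl | rfl <;> rcases hb3 with rfl | rfl | rfl
  · exact absurd rfl hab
  · exact absurd (contra_xy rfl) not_false
  · exact absurd (contra_xz rfl) not_false
  · exact absurd (contra_xy (Set.pair_comm b a)) not_false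
  · exact absurd rfl hab
  · exact key a b hyz rfl
  · exact absurd (contra_xz (Set.pair_comm b a)) not_false
  · exact key b a hyz (Set.pair_comm b a)
  · exact absurd rfl hab

lemma inter_nonempty (F : P X ≃o P Y) {x y z : X} (hxy : x ≠ y) (hxz : x ≠ z)
    (hyz : y ≠ z) : ((F (pr x y hxy)).1 ∩ (F (pr x z hxz)).1).Nonempty := by
  rw [Set.nonempty_iff_ne_empty]
  intro hemp
  have hdisj : ∀ a, a ∈ (F (pr x y hxy)).1 → a ∉ (F (pr x z hxz)).1 := by
    intro a h1 h2
    exact Set.eq_empty_iff_forall_notMem.1 hemp a ⟨h1, h2⟩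
  obtain ⟨p, q, hpq, hFxy⟩ := image_doubleton F hxy
  have hp : p ∉ (F (pr x z hxz)).1 := hdisj p (by rw [hFxy]; simp)
  have hq : q ∉ (F (pr x z hxz)).1 := hdisj q (by rw [hFxy]; simp)
  obtain ⟨r, s, hrs, hFxz⟩ := image_doubleton F hxz
  have hr : r ∈ (F (pr x z hxz)).1 := by rw [hFxz]; simp
  have hs : s ∈ (F (pr x z hxz)).1 := by rw [hFxz]; simp
  have h1 := inner F hxy hxz hyz hpq hFxy hp hq hr
  have h2 := inner F hxy hxz hyz hpq hFxy hp hq hs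
  exact hrs (pair_left_cancel (h1.symm.trans h2) (fun h => hp (h ▸ hr)))

lemma val_pair_eq {x y z w : X} (hxy : x ≠ y) (hzw : z ≠ w)
    (F : P X ≃o P Y) (h : F (pr x y hxy) = F (pr z w hzw)) :
    ({x, y} : Set X) = {z, w} :=
  congrArg Subtype.val (F.injective h)

lemma inter_subsingleton (F : P X ≃o P Y) {x y z : X} (hxy : x ≠ y) (hxz : x ≠ z)
    (hyz : y ≠ z) : ((F (pr x y hxy)).1 ∩ (F (pr x z hxz)).1).Subsingleton := by
  intro a ha b hb
  by_contra hab
  have h1 : (F (pr x y hxy)).1 = {a, b} :=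
    doubleton_of_two_mem (image_doubleton F hxy) ha.1 hb.1 hab
  have h2 : (F (pr x z hxz)).1 = {a, b} :=
    doubleton_of_two_mem (image_doubleton F hxz) ha.2 hb.2 hab
  have h3 : ({x, y} : Set X) = {x, z} :=
    val_pair_eq hxy hxz F (Subtype.ext (h1.trans h2.symm))
  exact hyz (pair_left_cancel h3 hxy)

lemma coh (F : P X ≃o P Y) {x y z w : X} (hxy : x ≠ y) (hxz : x ≠ z) (hxw : x ≠ w)
    (hyz : y ≠ z) (hyw : y ≠ w) (hzw : z ≠ w) {c1 c2 : Y}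
    (h1 : c1 ∈ (F (pr x y hxy)).1 ∩ (F (pr x z hxz)).1)
    (h2 : c2 ∈ (F (pr x y hxy)).1 ∩ (F (pr x w hxw)).1) : c1 = c2 := by
  by_contra hne
  have hFxy : (F (pr x y hxy)).1 = {c1, c2} :=
    doubleton_of_two_mem (image_doubleton F hxy) h1.1 h2.1 hne
  have hc2z : c2 ∉ (F (pr x z hxz)).1 := by
    intro hmem
    have h : (F (pr x z hxz)).1 = {c1, c2} :=
      doubleton_of_two_mem (image_doubleton F hxz) h1.2 hmem hne
    exact hyz (pair_left_cancel (val_pair_eq hxy hxz F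
      (Subtype.ext (hFxy.trans h.symm))) hxy)
  obtain ⟨r, hrc1, hFxz⟩ := doubleton_mem (image_doubleton F hxz) h1.2
  have hrmem : r ∈ (F (pr x z hxz)).1 := by rw [hFxz]; simp
  have hrc2 : r ≠ c2 := fun h => hc2z (h ▸ hrmem)
  have hc1w : c1 ∉ (F (pr x w hxw)).1 := by
    intro hmem
    have h : (F (pr x w hxw)).1 = {c1, c2} :=
      doubleton_of_two_mem (image_doubleton F hxw) hmem h2.2 hne
    exact hyw (pair_left_cancel (val_pair_eq hxy hxw F
      (Subtype.ext (hFxy.trans h.symm))) hxy)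
  obtain ⟨s, hsc2, hFxw⟩ := doubleton_mem (image_doubleton F hxw) h2.2
  obtain ⟨t, ht⟩ := inter_nonempty F hxz hxw hzw
  have htc1 : t ≠ c1 := fun h => hc1w (h ▸ ht.2)
  have htr : t = r := by
    have hh := ht.1
    rw [hFxz] at hh
    rcases hh with rfl | hh
    · exact absurd rfl htc1
    · exact hh
  have hsr : s = r := by
    have hh := ht.2
    rw [hFxw, htr] at hh
    rcases hh with hh | hh
    · exact absurd hh hrc2
    · exact hh.symm
  rw [hsr] at hFxw
  -- quadruple
  have hQ : (F (un (un (pr x y hxy) (pr x z hxz)) (pr x w hxw))).1 = {c1, c2, r} := by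
    rw [F_un, F_un, hFxy, hFxz, hFxw]
    ext u
    simp only [Set.mem_union, Set.mem_insert_iff, Set.mem_singleton_iff]
    tauto
  have hle : pr y z hyz ≤ un (un (pr x y hxy) (pr x z hxz)) (pr x w hxw) := by
    rw [le_iff_subset, pr_val]
    intro u hu
    simp only [un_val, pr_val, Set.mem_union, Set.mem_insert_iff, Set.mem_singleton_iff]
    rcases hu with rfl | hu
    · tauto
    · rcases hu with rfl; tauto
  have hsub : (F (pr y z hyz)).1 ⊆ {c1, c2, r} := hQ ▸ le_iff_subset.1 (F.monotone hle)
  obtain ⟨u, v, huv, hFyz⟩ := image_doubleton F hyz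
  have hu : u ∈ ({c1, c2, r} : Set Y) := hsub (by rw [hFyz]; simp)
  have hv : v ∈ ({c1, c2, r} : Set Y) := hsub (by rw [hFyz]; simp)
  have hxmem : x ∈ ({y, z} : Set X) := by
    rcases pair_subset_triple huv hu hv with h | h | h
    · have := val_pair_eq hyz hxy F (Subtype.ext (hFyz.trans (h.trans hFxy.symm)))
      rw [this]; simp
    · have := val_pair_eq hyz hxz F (Subtype.ext (hFyz.trans (h.trans hFxz.symm)))
      rw [this]; simp
    · have hFxw' : (F (pr x w hxw)).1 = {c2, r} := hFxw
      have := val_pair_eq hyz hxw F (Subtype.ext (hFyz.trans (h.trans hFxw'.symm)))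
      rw [this]; simp
  rcases hxmem with h | h
  · exact hxy h
  · exact hxz h

lemma exists_pt (F : P X ≃o P Y) (h3 : ∀ a b : X, ∃ c, c ≠ a ∧ c ≠ b) (x : X) :
    ∃ p : Y, ∀ (y : X) (h : x ≠ y), p ∈ (F (pr x y h)).1 := by
  obtain ⟨y0, hy0x, -⟩ := h3 x x
  obtain ⟨z0, hz0x, hz0y0⟩ := h3 x y0
  have hxy0 : x ≠ y0 := hy0x.symm
  have hxz0 : x ≠ z0 := hz0x.symm
  have hy0z0 : y0 ≠ z0 := hz0y0.symm
  obtain ⟨p, hp⟩ := inter_nonempty F hxy0 hxz0 hy0z0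
  refine ⟨p, fun y hxy => ?_⟩
  by_cases h1 : y = y0
  · subst h1; exact hp.1
  by_cases h2 : y = z0
  · subst h2; exact hp.2
  have hy0y : y0 ≠ y := fun h => h1 h.symm
  have hz0y : z0 ≠ y := fun h => h2 h.symm
  obtain ⟨c, hc⟩ := inter_nonempty F hxy0 hxy hy0y
  have := coh F hxy0 hxz0 hxy hy0z0 hy0y hz0y hp hc
  rw [this]
  exact hc.2

lemma transfer3 (F : P X ≃o P Y) {a b c : X} (hab : a ≠ b) (hac : a ≠ c) (hbc : b ≠ c) :
    ∃ p q r : Y, p ≠ q ∧ p ≠ r ∧ q ≠ r := by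
  obtain ⟨p, q, hpq, h1⟩ := image_doubleton F hab
  have hnsub : ¬(F (pr a c hac)).1 ⊆ {p, q} := by
    intro hsub
    have h2 : (F (pr a c hac)).1 = {p, q} := nt_subset_pair (F (pr a c hac)).2.2 hsub
    have h3 : ({a, b} : Set X) = {a, c} :=
      val_pair_eq hab hac F (Subtype.ext (h1.trans h2.symm))
    exact hbc (pair_left_cancel h3 hab)
  obtain ⟨r, hr, hrpq⟩ := Set.not_subset.1 hnsub
  simp only [Set.mem_insert_iff, Set.mem_singleton_iff, not_or] at hrpq
  exact ⟨p, q, r, hpq, fun h => hrpq.1 h.symm, fun h => hrpq.2 h.symm⟩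


lemma mem_image_dir (F : P X ≃o P Y) (φ : X → Y)
    (hφ : ∀ (x y : X) (h : x ≠ y), φ x ∈ (F (pr x y h)).1)
    (K : P X) {x : X} (hx : x ∈ K.1) : φ x ∈ (F K).1 := by
  obtain ⟨y, hy, hyx⟩ := K.2.2.exists_ne x
  have hxy : x ≠ y := fun h => hyx h.symm
  have hle : pr x y hxy ≤ K := by
    rw [le_iff_subset, pr_val]
    exact Set.insert_subset hx (Set.singleton_subset_iff.2 hy)
  exact le_iff_subset.1 (F.monotone hle) (hφ x y hxy)

lemma left_inv_aux (F : P X ≃o P Y) (φ : X → Y) (ψ : Y → X)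
    (hφ : ∀ (x y : X) (h : x ≠ y), φ x ∈ (F (pr x y h)).1)
    (hψ : ∀ (p q : Y) (h : p ≠ q), ψ p ∈ (F.symm (pr p q h)).1)
    (h3X : ∀ a b : X, ∃ c, c ≠ a ∧ c ≠ b) :
    ∀ x, ψ (φ x) = x := by
  intro x
  obtain ⟨y0, hy0x, -⟩ := h3X x x
  obtain ⟨z0, hz0x, hz0y0⟩ := h3X x y0
  have hxy0 : x ≠ y0 := hy0x.symm
  have hxz0 : x ≠ z0 := hz0x.symm
  have key : ∀ (y : X) (hxy : x ≠ y), ψ (φ x) ∈ ({x, y} : Set X) := by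
    intro y hxy
    obtain ⟨s, hs, hset⟩ := doubleton_mem (image_doubleton F hxy) (hφ x y hxy)
    have heq : pr (φ x) s hs.symm = F (pr x y hxy) := Subtype.ext hset.symm
    have := hψ (φ x) s hs.symm
    rw [heq, F.symm_apply_apply] at this
    exact this
  have h1 := key y0 hxy0
  have h2 := key z0 hxz0
  rcases h1 with h1 | h1
  · exact h1
  · rcases h2 with h2 | h2
    · exact h2
    · rw [h1] at h2
      exact absurd h2 hz0y0.symm

end basic

section main
variable {X Y : Type*} [TopologicalSpace X] [CompactSpace X] [T2Space X]
  [TopologicalSpace Y] [CompactSpace Y] [T2Space Y]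

theorem main (hX : ∃ x y : X, x ≠ y) (hY : ∃ x y : Y, x ≠ y)
    (F : P X ≃o P Y) :
    ∃ φ : X ≃ₜ Y,
      (∀ K : P X, (F K : Set Y) = φ '' (K : Set X)) ∧
      ((∃ x y z : X, x ≠ y ∧ x ≠ z ∧ y ≠ z) →
        ∀ ψ : X ≃ₜ Y, (∀ K : P X, (F K : Set Y) = ψ '' (K : Set X)) → ψ = φ) := by
  classical
  by_cases h3 : ∃ x y z : X, x ≠ y ∧ x ≠ z ∧ y ≠ z
  · -- main case: at least three points
    have h3X : ∀ a b : X, ∃ c, c ≠ a ∧ c ≠ b := third_point h3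
    obtain ⟨a, b, c, hab, hac, hbc⟩ := h3
    have h3Y : ∀ a b : Y, ∃ c, c ≠ a ∧ c ≠ b :=
      third_point (transfer3 F hab hac hbc)
    choose φ hφ using exists_pt F h3X
    have hψex : ∀ p : Y, ∃ x : X, ∀ (q : Y) (h : p ≠ q), x ∈ (F.symm (pr p q h)).1 :=
      exists_pt F.symm h3Y
    choose ψ hψ using hψex
    have hφ' : ∀ (x y : X) (h : x ≠ y), φ x ∈ ((F.symm).symm (pr x y h)).1 := by
      simp only [OrderIso.symm_symm]
      exact hφ
    have linv : ∀ x, ψ (φ x) = x := left_inv_aux F φ ψ hφ hψ h3X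
    have rinv : ∀ p, φ (ψ p) = p := left_inv_aux F.symm ψ φ hψ hφ' h3Y
    set e : X ≃ Y := ⟨φ, ψ, linv, rinv⟩ with he
    have himg : ∀ K : P X, (F K).1 = φ '' K.1 := by
      intro K
      apply subset_antisymm
      · intro p hp
        have h1 : ψ p ∈ (F.symm (F K)).1 := mem_image_dir F.symm ψ hψ (F K) hp
        rw [F.symm_apply_apply] at h1
        exact ⟨ψ p, h1, rinv p⟩
      · rintro - ⟨x, hx, rfl⟩
        exact mem_image_dir F φ hφ K hx
    have hclosedφ : ∀ C : Set X, IsClosed C → IsClosed (φ '' C) := by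
      intro C hC
      rcases C.subsingleton_or_nontrivial with hs | hnt
      · rcases hs.eq_empty_or_singleton with rfl | ⟨x, rfl⟩
        · simp
        · rw [Set.image_singleton]; exact isClosed_singleton
      · exact (himg ⟨C, hC, hnt⟩ ▸ (F ⟨C, hC, hnt⟩).2.1 : IsClosed (φ '' C))
    have himgY : ∀ K : P Y, (F.symm K).1 = ψ '' K.1 := by
      intro K
      apply subset_antisymm
      · intro x hx
        have h1 : φ x ∈ ((F.symm).symm (F.symm K)).1 :=
          mem_image_dir (F.symm).symm φ hφ' (F.symm K) hx
        rw [OrderIso.symm_symm, F.apply_symm_apply] at h1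
        exact ⟨φ x, h1, linv x⟩
      · rintro - ⟨p, hp, rfl⟩
        exact mem_image_dir F.symm ψ hψ K hp
    have hclosedψ : ∀ C : Set Y, IsClosed C → IsClosed (ψ '' C) := by
      intro C hC
      rcases C.subsingleton_or_nontrivial with hs | hnt
      · rcases hs.eq_empty_or_singleton with rfl | ⟨p, rfl⟩
        · simp
        · rw [Set.image_singleton]; exact isClosed_singleton
      · exact (himgY ⟨C, hC, hnt⟩ ▸ (F.symm ⟨C, hC, hnt⟩).2.1 : IsClosed (ψ '' C))
    have contφ : Continuous φ := by
      rw [continuous_iff_isClosed]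
      intro C hC
      have : φ ⁻¹' C = ψ '' C := by
        ext x
        constructor
        · intro hx
          exact ⟨φ x, hx, linv x⟩
        · rintro ⟨p, hp, rfl⟩
          show φ (ψ p) ∈ C
          rw [rinv p]
          exact hp
      rw [this]
      exact hclosedψ C hC
    have contψ : Continuous ψ := by
      rw [continuous_iff_isClosed]
      intro C hC
      have : ψ ⁻¹' C = φ '' C := by
        ext p
        constructor
        · intro hp
          exact ⟨ψ p, hp, rinv p⟩
        · rintro ⟨x, hx, rfl⟩
          show ψ (φ x) ∈ C
          rw [linv x]
          exact hx
      rw [this]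
      exact hclosedφ C hC
    refine ⟨⟨e, contφ, contψ⟩, fun K => himg K, fun _ ψ' hψ' => ?_⟩
    refine Homeomorph.ext fun x => ?_
    obtain ⟨y, hyx, -⟩ := h3X x x
    obtain ⟨z, hzx, hzy⟩ := h3X x y
    have hxy : x ≠ y := hyx.symm
    have hxz : x ≠ z := hzx.symm
    have h1 : ψ' x ∈ (F (pr x y hxy)).1 := by
      rw [hψ' (pr x y hxy)]
      exact ⟨x, by simp [pr], rfl⟩
    have h2 : ψ' x ∈ (F (pr x z hxz)).1 := by
      rw [hψ' (pr x z hxz)]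
      exact ⟨x, by simp [pr], rfl⟩
    exact inter_subsingleton F hxy hxz hzy.symm ⟨h1, h2⟩ ⟨hφ x y hxy, hφ x z hxz⟩
  · -- degenerate case: exactly two points
    obtain ⟨a, b, hab⟩ := hX
    have h3' := h3
    push_neg at h3
    have hXtwo : ∀ w : X, w = a ∨ w = b := by
      intro w
      by_contra hw
      push_neg at hw
      exact hab (h3 w a b hw.1 hw.2)
    have hPX : ∀ K : P X, K.1 = Set.univ := by
      intro K
      obtain ⟨u, hu, v, hv, huv⟩ := K.2.2
      apply Set.eq_univ_of_forall
      intro w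
      rcases hXtwo u with rfl | rfl <;> rcases hXtwo v with rfl | rfl <;>
        rcases hXtwo w with rfl | rfl <;> first | assumption | exact absurd rfl huv
    obtain ⟨c, d, hcd⟩ := hY
    have hYtwo : ∀ w : Y, w = c ∨ w = d := by
      intro w
      by_contra hw
      push_neg at hw
      have hcw : c ≠ w := fun h => hw.1 h.symm
      have h1 : pr c d hcd ≠ pr c w hcw := by
        intro h
        exact hw.2 (pair_left_cancel (congrArg Subtype.val h) hcd).symm
      exact h1 (F.symm.injective (Subtype.ext ((hPX _).trans (hPX _).symm)))
    have hPY : ∀ K : P Y, K.1 = Set.univ := by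
      intro K
      obtain ⟨u, hu, v, hv, huv⟩ := K.2.2
      apply Set.eq_univ_of_forall
      intro w
      rcases hYtwo u with rfl | rfl <;> rcases hYtwo v with rfl | rfl <;>
        rcases hYtwo w with rfl | rfl <;> first | assumption | exact absurd rfl huv
    haveI hfinX : Finite X := Finite.of_surjective (fun i : Bool => cond i a b)
      (fun w => by rcases hXtwo w with rfl | rfl; exacts [⟨true, rfl⟩, ⟨false, rfl⟩])
    haveI hfinY : Finite Y := Finite.of_surjective (fun i : Bool => cond i c d)
      (fun w => by rcases hYtwo w with rfl | rfl; exacts [⟨true, rfl⟩, ⟨false, rfl⟩])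
    have hba : b ≠ a := fun h => hab h.symm
    have hdc : d ≠ c := fun h => hcd h.symm
    set φf : X → Y := fun x => if x = a then c else d with hφf
    set ψf : Y → X := fun y => if y = c then a else b with hψf
    have linv : ∀ x, ψf (φf x) = x := by
      intro x
      rcases hXtwo x with rfl | rfl
      · simp [hφf, hψf]
      · simp [hφf, hψf, hba, hdc]
    have rinv : ∀ y, φf (ψf y) = y := by
      intro y
      rcases hYtwo y with rfl | rfl
      · simp [hφf, hψf]
      · simp [hφf, hψf, hba, hdc]
    have hsurj : Function.Surjective φf := by
      intro w
      rcases hYtwo w with rfl | rfl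
      · exact ⟨a, by simp [hφf]⟩
      · exact ⟨b, by simp [hφf, hba]⟩
    refine ⟨⟨⟨φf, ψf, linv, rinv⟩, continuous_of_discreteTopology,
      continuous_of_discreteTopology⟩, fun K => ?_, fun habs => absurd habs h3'⟩
    show (F K).1 = φf '' K.1
    rw [hPY (F K), hPX K, Set.image_univ]
    exact (Set.range_eq_univ.mpr hsurj).symm
end main



end F2Aux


/-- Let `X` and `Y` be compact Hausdorff spaces each with at least two points,
and let `F : F₂(X) → F₂(Y)` be an order isomorphism between the posets of closed subsets
with at least two elements, ordered by inclusion. Then there exists a homeomorphism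
`φ : X → Y` such that `F(K) = φ[K]` for all `K ∈ F₂(X)`; moreover `φ` is unique if `X` has
at least three points. -/
theorem orderIso_closed_nontrivial_induced_by_homeomorph
    {X Y : Type*} [TopologicalSpace X] [CompactSpace X] [T2Space X]
    [TopologicalSpace Y] [CompactSpace Y] [T2Space Y]
    (hX : ∃ x y : X, x ≠ y) (hY : ∃ x y : Y, x ≠ y)
    (F : {K : Set X // IsClosed K ∧ K.Nontrivial} ≃o
         {K : Set Y // IsClosed K ∧ K.Nontrivial}) :
    ∃ φ : X ≃ₜ Y,
      (∀ K : {K : Set X // IsClosed K ∧ K.Nontrivial}, (F K : Set Y) = φ '' (K : Set X)) ∧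
      ((∃ x y z : X, x ≠ y ∧ x ≠ z ∧ y ≠ z) →
        ∀ ψ : X ≃ₜ Y,
          (∀ K : {K : Set X // IsClosed K ∧ K.Nontrivial},
            (F K : Set Y) = ψ '' (K : Set X)) → ψ = φ) := by
  exact F2Aux.main hX hY F
end

section
/- Let X be a compact Hausdorff space with at least two points, x ∈ X a non-isolated point, and F : F₂(X) → F₂(Y) an order isomorphism (Y compact Hausdorff with at least two points). Then the intersection over all open neighborhoods O of x of the sets F(cl(O)) is a singleton. -/
/-- Let `X` be a compact Hausdorff space with at least two points, `x ∈ X` a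
non-isolated point, and `F : F₂(X) → F₂(Y)` an order isomorphism, where `Y` is compact
Hausdorff with at least two points and `F₂` denotes the poset of closed subsets with at
least two elements ordered by inclusion. Then the intersection over all open neighborhoods
`O` of `x` of the sets `F(cl O)` is a singleton. -/
theorem inter_image_closure_nbhds_singleton
    {X Y : Type*} [TopologicalSpace X] [CompactSpace X] [T2Space X]
    [TopologicalSpace Y] [CompactSpace Y] [T2Space Y]
    (hX : ∃ x y : X, x ≠ y) (hY : ∃ x y : Y, x ≠ y)
    (x : X) (hx : ¬IsOpen ({x} : Set X))
    (F : {K : Set X // IsClosed K ∧ K.Nontrivial} ≃o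
         {K : Set Y // IsClosed K ∧ K.Nontrivial}) :
    ∃! y : Y, ∀ (O : Set X) (hO : IsOpen O) (hxO : x ∈ O)
      (hnt : (closure O).Nontrivial),
      y ∈ (F ⟨closure O, isClosed_closure, hnt⟩ : Set Y) := by
  -- every open neighborhood of x has nontrivial closure
  have hnt' : ∀ O : Set X, IsOpen O → x ∈ O → (closure O).Nontrivial := by
    intro O hO hxO
    refine Set.Nontrivial.mono ?_ subset_closure
    by_contra h
    rw [Set.not_nontrivial_iff] at h
    exact hx (h.eq_singleton_of_mem hxO ▸ hO)
  -- the directed family of compact sets F (closure O)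
  set ι := {O : Set X // IsOpen O ∧ x ∈ O} with hι
  have : Nonempty ι := ⟨⟨Set.univ, isOpen_univ, Set.mem_univ x⟩⟩
  set t : ι → Set Y := fun O =>
    (F ⟨closure O.1, isClosed_closure, hnt' O.1 O.2.1 O.2.2⟩ : Set Y) with ht
  have hdir : Directed (· ⊇ ·) t := by
    intro O₁ O₂
    refine ⟨⟨O₁.1 ∩ O₂.1, O₁.2.1.inter O₂.2.1, ⟨O₁.2.2, O₂.2.2⟩⟩, ?_, ?_⟩
    · exact F.monotone (closure_mono Set.inter_subset_left)
    · exact F.monotone (closure_mono Set.inter_subset_right)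
  have hne : ∀ O : ι, (t O).Nonempty := fun O => (F _).2.2.nonempty
  have hcl : ∀ O : ι, IsClosed (t O) := fun O => (F _).2.1
  have hcp : ∀ O : ι, IsCompact (t O) := fun O => (hcl O).isCompact
  obtain ⟨y, hy⟩ :=
    IsCompact.nonempty_iInter_of_directed_nonempty_isCompact_isClosed t hdir hne hcp hcl
  refine ⟨y, ?_, ?_⟩
  · intro O hO hxO hnt
    exact Set.mem_iInter.1 hy ⟨O, hO, hxO⟩
  · -- uniqueness
    intro y' hy'
    by_contra hne'
    have hyall : ∀ O : Set X, IsOpen O → x ∈ O →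
        ∀ hnt : (closure O).Nontrivial, y ∈ (F ⟨closure O, isClosed_closure, hnt⟩ : Set Y) := by
      intro O hO hxO hnt
      exact Set.mem_iInter.1 hy ⟨O, hO, hxO⟩
    set P : {K : Set Y // IsClosed K ∧ K.Nontrivial} :=
      ⟨{y', y}, (Set.toFinite _).isClosed,
        ⟨y', Set.mem_insert _ _, y, Set.mem_insert_of_mem _ rfl, fun h => hne' h⟩⟩
    set K := F.symm P with hK
    -- K ⊆ closure O for every open O ∋ x
    have hKsub : ∀ O : Set X, IsOpen O → x ∈ O → (K : Set X) ⊆ closure O := by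
      intro O hO hxO
      have hPle : P ≤ F ⟨closure O, isClosed_closure, hnt' O hO hxO⟩ := by
        intro z hz
        rcases hz with rfl | hz
        · exact hy' O hO hxO (hnt' O hO hxO)
        · rcases hz with rfl
          exact hyall O hO hxO (hnt' O hO hxO)
      have := F.symm.monotone hPle
      rw [OrderIso.symm_apply_apply] at this; exact this
    -- hence K ⊆ {x}
    have hKx : (K : Set X) ⊆ {x} := by
      intro z hz
      by_contra hzx
      obtain ⟨u, v, hu, hv, hxu, hzv, huv⟩ := t2_separation (Ne.symm hzx)
      have : z ∈ closure u := hKsub u hu hxu hz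
      have : z ∈ vᶜ := closure_minimal huv.subset_compl_right hv.isClosed_compl this
      exact this hzv
    obtain ⟨a, ha, b, hb, hab⟩ := K.2.2
    exact hab ((hKx ha).trans (hKx hb).symm)
end

section
/- Let A be a unital C*-algebra. The atoms of the poset C(A) of unital commutative C*-subalgebras are exactly the subalgebras of the form C*(e, 1) = span{e, 1} for a projection e ∈ A with e ≠ 0 and e ≠ 1; equivalently, the atoms are exactly the two-dimensional elements of C(A). -/
/-- The poset `C(A)` of commutative unital C*-subalgebras of `A` (topologically closed
commutative *-subalgebras containing the unit), ordered by inclusion. -/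
abbrev CommCStarSub (A : Type*) [CStarAlgebra A] :=
  {C : StarSubalgebra ℂ A // IsClosed (C : Set A) ∧ ∀ x ∈ C, ∀ y ∈ C, x * y = y * x}

open StarAlgebra elemental WeakDual WeakDual.CharacterSpace

section Aux

variable {A : Type*} [CStarAlgebra A]

theorem CommCStarSub.mem_scalar_iff' (x : A) :
    x ∈ Set.range (algebraMap ℂ A) ↔ ∃ c : ℂ, x = c • 1 := by
  constructor
  · rintro ⟨c, rfl⟩; exact ⟨c, by rw [Algebra.algebraMap_eq_smul_one]⟩
  · rintro ⟨c, rfl⟩; exact ⟨c, by rw [Algebra.algebraMap_eq_smul_one]⟩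

theorem CommCStarSub.exists_sa_nonscalar' (S : StarSubalgebra ℂ A) (x : A) (hx : x ∈ S)
    (hns : x ∉ Set.range (algebraMap ℂ A)) :
    ∃ a ∈ S, IsSelfAdjoint a ∧ a ∉ Set.range (algebraMap ℂ A) := by
  by_contra h
  push_neg at h
  have hu_sa : IsSelfAdjoint (x + star x) := by
    simp [IsSelfAdjoint, star_add, add_comm]
  have hv_sa : IsSelfAdjoint (Complex.I • (x - star x)) := by
    simp only [IsSelfAdjoint, star_smul, star_sub, star_star, Complex.star_def,
      Complex.conj_I, neg_smul, smul_sub, neg_sub, neg_sub_neg]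
  obtain ⟨cu, hcu⟩ := h _ (add_mem hx (star_mem hx)) hu_sa
  obtain ⟨cv, hcv⟩ := h _ (SMulMemClass.smul_mem _ (sub_mem hx (star_mem hx))) hv_sa
  apply hns
  have hx2 : x = ((1:ℂ)/2) • (x + star x) + (-(Complex.I)/2) • (Complex.I • (x - star x)) := by
    match_scalars <;> simp <;> ring_nf <;> simp [Complex.I_sq] <;> ring
  refine ⟨(1/2) * cu + (-(Complex.I)/2) * cv, ?_⟩
  rw [map_add, map_mul, map_mul, hcu, hcv, ← Algebra.smul_def, ← Algebra.smul_def, ← hx2]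

theorem CommCStarSub.char_cfc (a : A) [IsStarNormal a] (f : C(spectrum ℂ a, ℂ))
    (φ : characterSpace ℂ (elemental ℂ a)) :
    φ (continuousFunctionalCalculus a f) = f (characterSpaceToSpectrum a φ) := by
  have h3 := (gelfandStarTransform (elemental ℂ a)).apply_symm_apply
      (((characterSpaceHomeo a).compStarAlgEquiv' ℂ ℂ) f)
  calc φ ((gelfandStarTransform (elemental ℂ a)).symm
        (((characterSpaceHomeo a).compStarAlgEquiv' ℂ ℂ) f))
      = gelfandStarTransform (elemental ℂ a) ((gelfandStarTransform (elemental ℂ a)).symm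
        (((characterSpaceHomeo a).compStarAlgEquiv' ℂ ℂ) f)) φ := rfl
    _ = (((characterSpaceHomeo a).compStarAlgEquiv' ℂ ℂ) f) φ := by rw [h3]
    _ = f (characterSpaceToSpectrum a φ) := rfl

/-- If an idempotent is a scalar multiple of `1`, it is `0` or `1`. -/
theorem CommCStarSub.idem_nonscalar (e : A) (hid : IsIdempotentElem e) (he0 : e ≠ 0)
    (he1 : e ≠ 1) : e ∉ Set.range (algebraMap ℂ A) := by
  haveI : Nontrivial A := ⟨⟨e, 0, he0⟩⟩
  rw [CommCStarSub.mem_scalar_iff']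
  rintro ⟨c, rfl⟩
  have h1 : (c * c) • (1 : A) = c • 1 := by
    have := hid
    rwa [IsIdempotentElem, smul_mul_smul_comm, one_mul] at this
  have h2 : (c * c - c) • (1 : A) = 0 := by rw [sub_smul, h1, sub_self]
  rcases smul_eq_zero.mp h2 with hc | hc
  · have hc' : c * (c - 1) = 0 := by linear_combination hc
    rcases mul_eq_zero.mp hc' with rfl | hc''
    · exact he0 (by simp)
    · rw [sub_eq_zero.mp hc''] at he1
      exact he1 (by simp)
  · exact one_ne_zero hc

/-- A non-scalar element together with `1` is linearly independent. -/
theorem CommCStarSub.linind_one (a : A) (hans : a ∉ Set.range (algebraMap ℂ A)) :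
    LinearIndependent ℂ ![(1 : A), a] := by
  haveI : Nontrivial A := ⟨⟨a, 0, fun h => hans ⟨0, by simp [h]⟩⟩⟩
  rw [LinearIndependent.pair_iff]
  intro s t hst
  by_cases ht : t = 0
  · subst ht
    rw [zero_smul, add_zero] at hst
    rcases smul_eq_zero.mp hst with hs | hs
    · exact ⟨hs, rfl⟩
    · exact absurd hs one_ne_zero
  · exfalso
    apply hans
    rw [CommCStarSub.mem_scalar_iff']
    refine ⟨-s / t, ?_⟩
    have : t • a = (-s) • (1 : A) := by
      rw [neg_smul]; exact eq_neg_of_add_eq_zero_right hst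
    have := congrArg (fun z => t⁻¹ • z) this
    simpa [smul_smul, inv_mul_cancel₀ ht, div_eq_inv_mul, mul_comm] using this

/-- The canonical linear equivalence between a star subalgebra and its underlying submodule. -/
noncomputable def CommCStarSub.ssaEquiv (S : StarSubalgebra ℂ A) :
    S ≃ₗ[ℂ] (Subalgebra.toSubmodule S.toSubalgebra) where
  toFun x := ⟨x.1, x.2⟩
  invFun x := ⟨x.1, x.2⟩
  map_add' _ _ := rfl
  map_smul' _ _ := rfl
  left_inv _ := rfl
  right_inv _ := rfl

set_option maxHeartbeats 2000000 in
/-- The main hard direction: an atom is spanned by `1` and a nontrivial projection. -/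
theorem CommCStarSub.atom_imp_proj (C : CommCStarSub A)
    (h1 : (C.val : Set A) ≠ Set.range (algebraMap ℂ A))
    (h2 : ∀ D : CommCStarSub A, D < C → (D.val : Set A) = Set.range (algebraMap ℂ A)) :
    ∃ e : A, IsSelfAdjoint e ∧ IsIdempotentElem e ∧ e ≠ 0 ∧ e ≠ 1 ∧
      (C.val : Set A) = {x : A | ∃ μ ν : ℂ, x = μ • (1 : A) + ν • e} := by
  have hsub : Set.range (algebraMap ℂ A) ⊆ (C.val : Set A) := by
    rintro - ⟨c, rfl⟩; exact C.val.algebraMap_mem c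
  obtain ⟨x, hxC, hxns⟩ := Set.exists_of_ssubset (ssubset_of_subset_of_ne hsub (Ne.symm h1))
  obtain ⟨a, haC, ha_sa, hans⟩ := CommCStarSub.exists_sa_nonscalar' C.val x hxC hxns
  haveI : IsStarNormal a := ha_sa.isStarNormal
  have key : ∀ b : A, IsSelfAdjoint b → b ∈ C.val → b ∉ Set.range (algebraMap ℂ A) →
      elemental ℂ b = C.val := by
    intro b hb hbC hbns
    haveI : IsStarNormal b := hb.isStarNormal
    have hle : elemental ℂ b ≤ C.val := elemental.le_of_mem C.prop.1 hbC
    by_contra hne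
    have hlt : (⟨elemental ℂ b, elemental.isClosed ℂ b,
        fun x hx y hy => congrArg Subtype.val
          (mul_comm (⟨x, hx⟩ : elemental ℂ b) ⟨y, hy⟩)⟩ : CommCStarSub A) < C :=
      Subtype.coe_lt_coe.mp (lt_of_le_of_ne hle hne)
    exact hbns (h2 _ hlt ▸ elemental.self_mem ℂ b)
  have hCE : elemental ℂ a = C.val := key a ha_sa haC hans
  -- the spectrum has at least two points
  have htwo : ∃ t₁ t₂ : spectrum ℂ a, (t₁ : ℂ) ≠ (t₂ : ℂ) := by
    by_contra h
    push_neg at h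
    have hconst : ∃ c : ℂ, (ContinuousMap.id ℂ).restrict (spectrum ℂ a) = c • 1 := by
      rcases isEmpty_or_nonempty (spectrum ℂ a) with h0 | h0
      · exact ⟨0, ContinuousMap.ext fun z => (h0.false z).elim⟩
      · obtain ⟨t₀⟩ := h0
        refine ⟨(t₀ : ℂ), ContinuousMap.ext fun z => ?_⟩
        simpa using h z t₀
    obtain ⟨c, hc⟩ := hconst
    have h4 : (⟨a, elemental.self_mem ℂ a⟩ : elemental ℂ a) = c • 1 := by
      rw [← continuousFunctionalCalculus_map_id a, hc, map_smul, map_one]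
    exact hans ((CommCStarSub.mem_scalar_iff' a).mpr ⟨c, congrArg Subtype.val h4⟩)
  obtain ⟨t₁, t₂, ht12⟩ := htwo
  -- characters associated to the two spectrum points
  set φ₁ := (characterSpaceHomeo a).symm t₁ with hφ₁def
  set φ₂ := (characterSpaceHomeo a).symm t₂ with hφ₂def
  have hφ₁a : φ₁ ⟨a, elemental.self_mem ℂ a⟩ = (t₁ : ℂ) := by
    have h' : characterSpaceToSpectrum a φ₁ = t₁ := (characterSpaceHomeo a).apply_symm_apply t₁
    exact congrArg Subtype.val h'
  have hφ₂a : φ₂ ⟨a, elemental.self_mem ℂ a⟩ = (t₂ : ℂ) := by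
    have h' : characterSpaceToSpectrum a φ₂ = t₂ := (characterSpaceHomeo a).apply_symm_apply t₂
    exact congrArg Subtype.val h'
  have hφ₁spec : characterSpaceToSpectrum a φ₁ = t₁ := (characterSpaceHomeo a).apply_symm_apply t₁
  have hφ₂spec : characterSpaceToSpectrum a φ₂ = t₂ := (characterSpaceHomeo a).apply_symm_apply t₂
  -- set of elements on which the two characters agree: a closed star subalgebra
  set S' : StarSubalgebra ℂ A :=
    { carrier := {x : A | ∃ hx : x ∈ elemental ℂ a, φ₁ ⟨x, hx⟩ = φ₂ ⟨x, hx⟩}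
      mul_mem' := by
        rintro x y ⟨hx, hx'⟩ ⟨hy, hy'⟩
        refine ⟨mul_mem hx hy, ?_⟩
        have hxy : (⟨x * y, mul_mem hx hy⟩ : elemental ℂ a) = ⟨x, hx⟩ * ⟨y, hy⟩ := rfl
        rw [hxy, map_mul, map_mul, hx', hy']
      add_mem' := by
        rintro x y ⟨hx, hx'⟩ ⟨hy, hy'⟩
        refine ⟨add_mem hx hy, ?_⟩
        have hxy : (⟨x + y, add_mem hx hy⟩ : elemental ℂ a) = ⟨x, hx⟩ + ⟨y, hy⟩ := rfl
        rw [hxy, map_add, map_add, hx', hy']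
      algebraMap_mem' := by
        intro c
        refine ⟨algebraMap_mem _ c, ?_⟩
        have hc : (⟨algebraMap ℂ A c, algebraMap_mem _ c⟩ : elemental ℂ a) =
            algebraMap ℂ (elemental ℂ a) c := rfl
        rw [hc, AlgHomClass.commutes, AlgHomClass.commutes]
      star_mem' := by
        rintro x ⟨hx, hx'⟩
        refine ⟨star_mem hx, ?_⟩
        have hs : (⟨star x, star_mem hx⟩ : elemental ℂ a) = star (⟨x, hx⟩ : elemental ℂ a) := rfl
        rw [hs, map_star, map_star, hx'] } with hS'def
  have hclosed : IsClosed (S' : Set A) := by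
    have hset : (S' : Set A) = Subtype.val '' {y : elemental ℂ a | φ₁ y = φ₂ y} := by
      ext x
      constructor
      · rintro ⟨hx, hx'⟩; exact ⟨⟨x, hx⟩, hx', rfl⟩
      · rintro ⟨⟨y, hy⟩, hy', rfl⟩; exact ⟨hy, hy'⟩
    rw [hset]
    exact (elemental.isClosedEmbedding_coe ℂ a).isClosedMap _
      (isClosed_eq (map_continuous φ₁) (map_continuous φ₂))
  -- the spectrum has at most the two points `t₁ t₂`
  have hS2 : ∀ z : spectrum ℂ a, (z : ℂ) = (t₁ : ℂ) ∨ (z : ℂ) = (t₂ : ℂ) := by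
    by_contra h
    push_neg at h
    obtain ⟨t₃, ht31, ht32⟩ := h
    set f : C(spectrum ℂ a, ℂ) :=
      ⟨fun z => ((‖(z : ℂ) - (t₁ : ℂ)‖ * ‖(z : ℂ) - (t₂ : ℂ)‖ : ℝ) : ℂ), by fun_prop⟩ with hfdef
    set b : A := ((continuousFunctionalCalculus a f : elemental ℂ a) : A) with hbdef
    have hbE : b ∈ elemental ℂ a := (continuousFunctionalCalculus a f).2
    have hbmk : (⟨b, hbE⟩ : elemental ℂ a) = continuousFunctionalCalculus a f := rfl
    have hb_sa : IsSelfAdjoint b := by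
      have hf_star : star f = f := ContinuousMap.ext fun z => by
        simp [hfdef, Complex.conj_ofReal]
      have : star (continuousFunctionalCalculus a f) = continuousFunctionalCalculus a f := by
        rw [← map_star, hf_star]
      exact congrArg Subtype.val this
    have hb_ns : b ∉ Set.range (algebraMap ℂ A) := by
      rw [CommCStarSub.mem_scalar_iff']
      rintro ⟨c, hbc⟩
      have h2' : continuousFunctionalCalculus a (c • 1) = c • 1 := by rw [map_smul, map_one]
      have h3' : continuousFunctionalCalculus a f = continuousFunctionalCalculus a (c • 1) := by
        rw [h2']; exact Subtype.ext (by simpa using hbc)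
      have hf : f = c • 1 := EquivLike.injective _ h3'
      have hc0 : c = 0 := by
        have := congrArg (fun u => u t₁) hf
        simpa [hfdef] using this.symm
      have := congrArg (fun u => u t₃) hf
      rw [hc0] at this
      simp only [hfdef, ContinuousMap.coe_mk, ContinuousMap.smul_apply,
        ContinuousMap.one_apply, zero_smul, smul_eq_mul, zero_mul, mul_one,
        Complex.ofReal_eq_zero] at this
      rcases mul_eq_zero.mp this with h' | h' <;>
        [exact ht31 (sub_eq_zero.mp (norm_eq_zero.mp h'));
         exact ht32 (sub_eq_zero.mp (norm_eq_zero.mp h'))]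
    -- b generates C, hence a lies in the elemental algebra of b, hence φ₁ a = φ₂ a
    have hbC : b ∈ C.val := hCE ▸ hbE
    have hEb : elemental ℂ b = C.val := key b hb_sa hbC hb_ns
    have haEb : a ∈ elemental ℂ b := hEb ▸ haC
    have hφb : φ₁ ⟨b, hbE⟩ = φ₂ ⟨b, hbE⟩ := by
      rw [hbmk, CommCStarSub.char_cfc, CommCStarSub.char_cfc, hφ₁spec, hφ₂spec]
      simp [hfdef]
    have hbS' : b ∈ S' := ⟨hbE, hφb⟩
    have hDS' : elemental ℂ b ≤ S' := elemental.le_of_mem hclosed hbS'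
    obtain ⟨ha', h'⟩ := hDS' haEb
    exact ht12 (by rw [← hφ₁a, ← hφ₂a]; exact h')
  -- the projection
  have hT : (t₂ : ℂ) - (t₁ : ℂ) ≠ 0 := sub_ne_zero.mpr (Ne.symm ht12)
  set g : C(spectrum ℂ a, ℂ) :=
    ⟨fun z => ((z : ℂ) - (t₁ : ℂ)) / ((t₂ : ℂ) - (t₁ : ℂ)), by fun_prop⟩ with hgdef
  have hg1 : g t₁ = 0 := by simp [hgdef]
  have hg2 : g t₂ = 1 := by simp [hgdef, div_self hT]
  have hgval : ∀ z : spectrum ℂ a, g z = 0 ∨ g z = 1 := by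
    intro z
    rcases hS2 z with hz | hz
    · left; simp [hgdef, hz]
    · right; simp [hgdef, hz, div_self hT]
  set e : A := ((continuousFunctionalCalculus a g : elemental ℂ a) : A) with hedef
  have heE : e ∈ elemental ℂ a := (continuousFunctionalCalculus a g).2
  have heC : e ∈ C.val := hCE ▸ heE
  have hg_star : star g = g := ContinuousMap.ext fun z => by
    rcases hgval z with hz | hz <;>
      simp only [ContinuousMap.star_apply, hz, Complex.star_def, map_zero, map_one]
  have he_sa : IsSelfAdjoint e := by
    have : star (continuousFunctionalCalculus a g) = continuousFunctionalCalculus a g := by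
      rw [← map_star, hg_star]
    exact congrArg Subtype.val this
  have hg_idem : g * g = g := ContinuousMap.ext fun z => by
    rcases hgval z with hz | hz <;> simp [hz]
  have he_idem : IsIdempotentElem e := by
    show e * e = e
    calc e * e = ((continuousFunctionalCalculus a g * continuousFunctionalCalculus a g :
          elemental ℂ a) : A) := rfl
      _ = ((continuousFunctionalCalculus a (g * g) : elemental ℂ a) : A) := by rw [← map_mul]
      _ = e := by rw [hg_idem]
  have he0 : e ≠ 0 := by
    intro h
    have h3' : continuousFunctionalCalculus a g = continuousFunctionalCalculus a 0 := by
      rw [map_zero]; exact Subtype.ext h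
    have hg : g = 0 := EquivLike.injective _ h3'
    have h5 := DFunLike.congr_fun hg t₂
    rw [hg2] at h5
    simpa using h5
  have he1 : e ≠ 1 := by
    intro h
    have h3' : continuousFunctionalCalculus a g = continuousFunctionalCalculus a 1 := by
      rw [map_one]; exact Subtype.ext h
    have hg : g = 1 := EquivLike.injective _ h3'
    have h5 := DFunLike.congr_fun hg t₁
    rw [hg1] at h5
    simpa using h5
  refine ⟨e, he_sa, he_idem, he0, he1, ?_⟩
  ext x
  constructor
  · intro hxC'
    have hxE : x ∈ elemental ℂ a := hCE ▸ hxC'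
    obtain ⟨h, hh⟩ : ∃ h : C(spectrum ℂ a, ℂ),
        continuousFunctionalCalculus a h = ⟨x, hxE⟩ :=
      ⟨(continuousFunctionalCalculus a).symm ⟨x, hxE⟩,
        (continuousFunctionalCalculus a).apply_symm_apply _⟩
    have hdecomp : h = h t₁ • 1 + (h t₂ - h t₁) • g := by
      ext z
      rcases hS2 z with hz | hz
      · have hz' : z = t₁ := Subtype.ext hz
        simp [hz', hg1]
      · have hz' : z = t₂ := Subtype.ext hz
        simp [hz', hg2]
    refine ⟨h t₁, h t₂ - h t₁, ?_⟩
    have := congrArg (fun u => ((continuousFunctionalCalculus a u : elemental ℂ a) : A)) hdecomp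
    rw [hh] at this
    rw [show ((⟨x, hxE⟩ : elemental ℂ a) : A) = x from rfl] at this
    rw [this, map_add, map_smul, map_smul, map_one]
    push_cast
    rfl
  · rintro ⟨μ, ν, rfl⟩
    exact add_mem (SMulMemClass.smul_mem μ (one_mem C.val)) (SMulMemClass.smul_mem ν heC)

end Aux

/-- Let `A` be a unital C*-algebra. The atoms of the poset `C(A)` of unital
commutative C*-subalgebras (whose bottom element is the scalars `ℂ·1`, the range of the
algebra map) are exactly the subalgebras of the form `C*(e,1) = span{1, e}` for a
projection `e ∈ A` with `e ≠ 0` and `e ≠ 1`; equivalently, the atoms are exactly the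
two-dimensional elements of `C(A)`. -/
theorem atoms_of_commCStarSub
    {A : Type*} [CStarAlgebra A] (C : CommCStarSub A) :
    (((C.val : Set A) ≠ Set.range (algebraMap ℂ A) ∧
        ∀ D : CommCStarSub A, D < C → (D.val : Set A) = Set.range (algebraMap ℂ A)) ↔
      ∃ e : A, IsSelfAdjoint e ∧ IsIdempotentElem e ∧ e ≠ 0 ∧ e ≠ 1 ∧
        (C.val : Set A) = {x : A | ∃ μ ν : ℂ, x = μ • (1 : A) + ν • e}) ∧
    (((C.val : Set A) ≠ Set.range (algebraMap ℂ A) ∧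
        ∀ D : CommCStarSub A, D < C → (D.val : Set A) = Set.range (algebraMap ℂ A)) ↔
      Module.finrank ℂ C.val = 2) := by
  -- easy direction: a projection span is an atom
  have proj_imp_atom : ∀ e : A, IsIdempotentElem e → e ≠ 0 → e ≠ 1 →
      (C.val : Set A) = {x : A | ∃ μ ν : ℂ, x = μ • (1 : A) + ν • e} →
      (C.val : Set A) ≠ Set.range (algebraMap ℂ A) ∧
        ∀ D : CommCStarSub A, D < C → (D.val : Set A) = Set.range (algebraMap ℂ A) := by
    intro e hid he0 he1 hset
    have hens := CommCStarSub.idem_nonscalar e hid he0 he1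
    have heC : e ∈ (C.val : Set A) := by
      rw [hset]; exact ⟨0, 1, by simp⟩
    constructor
    · intro h
      exact hens (h ▸ heC)
    · intro D hlt
      have hDC : (D.val : Set A) ⊆ (C.val : Set A) :=
        SetLike.coe_subset_coe.mpr (le_of_lt (Subtype.coe_lt_coe.mpr hlt))
      refine Set.Subset.antisymm ?_ ?_
      · intro y hyD
        have hyC := hDC hyD
        rw [hset] at hyC
        obtain ⟨μ, ν, rfl⟩ := hyC
        by_cases hν : ν = 0
        · subst hν
          exact ⟨μ, by rw [Algebra.algebraMap_eq_smul_one]; simp⟩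
        · exfalso
          have heD : e ∈ D.val := by
            have h1' : μ • (1 : A) + ν • e ∈ D.val := hyD
            have h2' : μ • (1 : A) ∈ D.val := SMulMemClass.smul_mem μ (one_mem D.val)
            have h3' : ν • e ∈ D.val := by
              have := sub_mem h1' h2'
              simpa using this
            have := SMulMemClass.smul_mem ν⁻¹ h3'
            rwa [smul_smul, inv_mul_cancel₀ hν, one_smul] at this
          have hCD : (C.val : Set A) ⊆ (D.val : Set A) := by
            intro z hzC
            rw [hset] at hzC
            obtain ⟨μ', ν', rfl⟩ := hzC
            exact add_mem (SMulMemClass.smul_mem μ' (one_mem D.val))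
              (SMulMemClass.smul_mem ν' heD)
          have : D.val = C.val := SetLike.coe_injective (Set.Subset.antisymm hDC hCD)
          exact (Subtype.coe_lt_coe.mpr hlt).ne this
      · rintro - ⟨c, rfl⟩
        exact D.val.algebraMap_mem c
  -- a projection span has dimension 2
  have proj_imp_finrank : ∀ e : A, IsIdempotentElem e → e ≠ 0 → e ≠ 1 →
      (C.val : Set A) = {x : A | ∃ μ ν : ℂ, x = μ • (1 : A) + ν • e} →
      Module.finrank ℂ C.val = 2 := by
    intro e hid he0 he1 hset
    haveI : Nontrivial A := ⟨⟨e, 0, he0⟩⟩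
    have hens := CommCStarSub.idem_nonscalar e hid he0 he1
    have hli : LinearIndependent ℂ ![(1 : A), e] := CommCStarSub.linind_one e hens
    have hp : Subalgebra.toSubmodule C.val.toSubalgebra =
        Submodule.span ℂ {(1 : A), e} := by
      ext x
      rw [Subalgebra.mem_toSubmodule, Submodule.mem_span_pair]
      constructor
      · intro hx
        have : x ∈ (C.val : Set A) := hx
        rw [hset] at this
        obtain ⟨μ, ν, h⟩ := this
        exact ⟨μ, ν, h.symm⟩
      · rintro ⟨μ, ν, h⟩
        have : x ∈ (C.val : Set A) := by rw [hset]; exact ⟨μ, ν, h.symm⟩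
        exact this
    have hrange : ({(1 : A), e} : Set A) = Set.range ![(1 : A), e] := by
      simp [Matrix.range_cons, Matrix.range_empty, Set.pair_comm]
    rw [(CommCStarSub.ssaEquiv C.val).finrank_eq, hp, hrange,
      finrank_span_eq_card hli, Fintype.card_fin]
  -- dimension 2 implies atom
  have finrank_imp_atom : Module.finrank ℂ C.val = 2 →
      (C.val : Set A) ≠ Set.range (algebraMap ℂ A) ∧
        ∀ D : CommCStarSub A, D < C → (D.val : Set A) = Set.range (algebraMap ℂ A) := by
    intro hfr
    have hp2 : Module.finrank ℂ (Subalgebra.toSubmodule C.val.toSubalgebra) = 2 := by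
      rw [← (CommCStarSub.ssaEquiv C.val).finrank_eq]; exact hfr
    haveI hfd : FiniteDimensional ℂ (Subalgebra.toSubmodule C.val.toSubalgebra) :=
      FiniteDimensional.of_finrank_pos (by rw [hp2]; norm_num)
    rcases subsingleton_or_nontrivial A with hA | hA
    · exfalso
      haveI : Subsingleton C.val := ⟨fun x y => Subtype.ext (Subsingleton.elim _ _)⟩
      rw [Module.finrank_zero_of_subsingleton] at hfr
      norm_num at hfr
    -- key claim: any subalgebra of C which is not the scalars equals C
    have key : ∀ S : StarSubalgebra ℂ A, S ≤ C.val →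
        (S : Set A) ≠ Set.range (algebraMap ℂ A) → S = C.val := by
      intro S hle hne
      have hsub : Set.range (algebraMap ℂ A) ⊆ (S : Set A) := by
        rintro - ⟨c, rfl⟩; exact S.algebraMap_mem c
      obtain ⟨x, hxS, hxns⟩ := Set.exists_of_ssubset (ssubset_of_subset_of_ne hsub (Ne.symm hne))
      obtain ⟨a, haS, _, hans⟩ := CommCStarSub.exists_sa_nonscalar' S x hxS hxns
      have hli : LinearIndependent ℂ ![(1 : A), a] := CommCStarSub.linind_one a hans
      have hsple : Submodule.span ℂ {(1 : A), a} ≤ Subalgebra.toSubmodule C.val.toSubalgebra := by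
        rw [Submodule.span_le]
        rintro z (rfl | rfl)
        · exact one_mem C.val
        · exact hle haS
      have hspan : Submodule.span ℂ {(1 : A), a} =
          Subalgebra.toSubmodule C.val.toSubalgebra := by
        apply Submodule.eq_of_le_of_finrank_le hsple
        rw [hp2]
        have hrange : ({(1 : A), a} : Set A) = Set.range ![(1 : A), a] := by
          simp [Matrix.range_cons, Matrix.range_empty, Set.pair_comm]
        rw [hrange, finrank_span_eq_card hli, Fintype.card_fin]
      apply le_antisymm hle
      intro z hzC
      have hz : z ∈ Submodule.span ℂ {(1 : A), a} := by
        rw [hspan, Subalgebra.mem_toSubmodule]; exact hzC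
      obtain ⟨μ, ν, h⟩ := Submodule.mem_span_pair.mp hz
      rw [← h]
      exact add_mem (SMulMemClass.smul_mem μ (one_mem S)) (SMulMemClass.smul_mem ν haS)
    constructor
    · intro h
      -- C would be spanned by 1, contradicting finrank = 2
      have h1 : Subalgebra.toSubmodule C.val.toSubalgebra = Submodule.span ℂ {(1 : A)} := by
        apply le_antisymm
        · intro z hz
          have : z ∈ (C.val : Set A) := hz
          rw [h] at this
          obtain ⟨c, rfl⟩ := this
          rw [Submodule.mem_span_singleton]
          exact ⟨c, (Algebra.algebraMap_eq_smul_one c).symm⟩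
        · rw [Submodule.span_le, Set.singleton_subset_iff]
          exact one_mem C.val
      rw [h1, finrank_span_singleton (one_ne_zero : (1 : A) ≠ 0)] at hp2
      norm_num at hp2
    · intro D hlt
      by_contra hne
      have hle : D.val ≤ C.val := le_of_lt (Subtype.coe_lt_coe.mpr hlt)
      have := key D.val hle hne
      exact (Subtype.coe_lt_coe.mpr hlt).ne this
  constructor
  · constructor
    · intro h
      exact CommCStarSub.atom_imp_proj C h.1 h.2
    · rintro ⟨e, _, hid, he0, he1, hset⟩
      exact proj_imp_atom e hid he0 he1 hset
  · constructor
    · intro h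
      obtain ⟨e, _, hid, he0, he1, hset⟩ := CommCStarSub.atom_imp_proj C h.1 h.2
      exact proj_imp_finrank e hid he0 he1 hset
    · exact finrank_imp_atom
end

section
/- Let J : A → B be a unital Jordan *-isomorphism between unital C*-algebras (a linear bijection preserving a ∘ b = (ab + ba)/2, the involution, and the unit). Then the map C ↦ J[C] is an order isomorphism from the poset C(A) of unital commutative C*-subalgebras of A onto C(B). -/
section JordanAux

variable {A B : Type*} [CStarAlgebra A] [CStarAlgebra B]

private lemma half_cancel {M : Type*} [AddCommGroup M] [Module ℂ M] {x y : M}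
    (h : x + x = y + y) : x = y := by
  have h2 : (2:ℂ) • x = (2:ℂ) • y := by rw [two_smul, two_smul]; exact h
  exact smul_right_injective M two_ne_zero h2

private lemma jm (J : A ≃ₗ[ℂ] B)
    (hjordan : ∀ a b : A,
      J ((2⁻¹ : ℂ) • (a * b + b * a)) = (2⁻¹ : ℂ) • (J a * J b + J b * J a))
    (a b : A) : J (a * b + b * a) = J a * J b + J b * J a := by
  have h := hjordan a b
  rw [map_smul] at h
  exact smul_right_injective B (by norm_num : (2⁻¹:ℂ) ≠ 0) h

private lemma jsq (J : A ≃ₗ[ℂ] B)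
    (hm : ∀ a b : A, J (a * b + b * a) = J a * J b + J b * J a) (a : A) :
    J (a * a) = J a * J a := half_cancel (by rw [← map_add]; exact hm a a)

private lemma jtriple (J : A ≃ₗ[ℂ] B)
    (hm : ∀ a b : A, J (a * b + b * a) = J a * J b + J b * J a) (a b : A) :
    J (a * b * a) = J a * J b * J a := by
  apply half_cancel
  have h0 : a*b*a + a*b*a = (a*(a*b+b*a)+(a*b+b*a)*a) - ((a*a)*b + b*(a*a)) := by
    noncomm_ring
  calc J (a*b*a) + J (a*b*a) = J (a*b*a + a*b*a) := (map_add J _ _).symm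
    _ = J (a*(a*b+b*a)+(a*b+b*a)*a) - J ((a*a)*b + b*(a*a)) := by rw [h0, map_sub]
    _ = (J a * (J a * J b + J b * J a) + (J a * J b + J b * J a) * J a)
        - ((J a * J a) * J b + J b * (J a * J a)) := by
        rw [hm a (a*b+b*a), hm (a*a) b, hm a b, jsq J hm a]
    _ = J a * J b * J a + J a * J b * J a := by noncomm_ring

private lemma jcomm_sa (J : A ≃ₗ[ℂ] B)
    (hm : ∀ a b : A, J (a * b + b * a) = J a * J b + J b * J a)
    (hstar : ∀ a : A, J (star a) = star (J a))
    {x y : A} (hxy : x * y = y * x) (hx : star x = x) (hy : star y = y) :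
    J x * J y = J y * J x := by
  have hsq : ∀ a : A, J (a*a) = J a * J a := jsq J hm
  have htr : ∀ a b : A, J (a*b*a) = J a * J b * J a := jtriple J hm
  set u := J x with hu
  set v := J y with hv
  set w := J (x*y) with hw
  have f1 : u * v + v * u = w + w := by
    rw [← hm x y]; rw [hw, ← map_add]; congr 1; rw [hxy]
  have f2 : u*v*u + u*v*u = (u*u)*v + v*(u*u) := by
    rw [← htr x y, ← hsq x, ← hm (x*x) y, ← map_add]
    congr 1
    have c1 : x*y*x = x*x*y := by rw [mul_assoc, ← hxy, ← mul_assoc]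
    have c2 : x*y*x = y*(x*x) := by rw [hxy, mul_assoc]
    rw [← c1, ← c2]
  have f3 : v*u*v + v*u*v = (v*v)*u + u*(v*v) := by
    rw [← htr y x, ← hsq y, ← hm (y*y) x, ← map_add]
    congr 1
    have c1 : y*x*y = y*y*x := by rw [mul_assoc, hxy, ← mul_assoc]
    have c2 : y*x*y = x*(y*y) := by rw [← hxy, mul_assoc]
    rw [← c1, ← c2]
  have f4 : u*(v*v)*u = w*w := by
    rw [← hsq y, ← htr x (y*y), hw, ← hsq (x*y)]
    congr 1
    calc x*(y*y)*x = (x*y)*(y*x) := by noncomm_ring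
      _ = x*y*(x*y) := by rw [← hxy]
  have f5 : v*(u*u)*v = w*w := by
    rw [← hsq x, ← htr y (x*x), hw, ← hsq (x*y)]
    congr 1
    calc y*(x*x)*y = (y*x)*(x*y) := by noncomm_ring
      _ = x*y*(x*y) := by rw [← hxy]
  have f6 : (u*u)*(v*v) + (v*v)*(u*u) = w*w + w*w := by
    rw [← hsq x, ← hsq y, ← hm (x*x) (y*y), hw, ← hsq (x*y), ← map_add]
    congr 1
    have d1 : x*x*(y*y) = x*y*(x*y) := by
      calc x*x*(y*y) = x*((x*y)*y) := by noncomm_ring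
        _ = x*((y*x)*y) := by rw [hxy]
        _ = x*y*(x*y) := by noncomm_ring
    have d2 : y*y*(x*x) = x*y*(x*y) := by
      calc y*y*(x*x) = y*((y*x)*x) := by noncomm_ring
        _ = y*((x*y)*x) := by rw [← hxy]
        _ = (y*x)*(y*x) := by noncomm_ring
        _ = x*y*(x*y) := by rw [← hxy]
    rw [d1, d2]
  have g1 : ((u*v)*(u*v) + (u*v)*(u*v)) = (u*u)*(v*v) + w*w := by
    have := congrArg (· * v) f2
    simp only [add_mul] at this
    calc (u*v)*(u*v) + (u*v)*(u*v) = (u*v*u)*v + (u*v*u)*v := by noncomm_ring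
      _ = ((u*u)*v)*v + v*(u*u)*v := this
      _ = (u*u)*(v*v) + v*(u*u)*v := by noncomm_ring
      _ = (u*u)*(v*v) + w*w := by rw [f5]
  have g2 : ((v*u)*(v*u) + (v*u)*(v*u)) = (v*v)*(u*u) + w*w := by
    have := congrArg (· * u) f3
    simp only [add_mul] at this
    calc (v*u)*(v*u) + (v*u)*(v*u) = (v*u*v)*u + (v*u*v)*u := by noncomm_ring
      _ = ((v*v)*u)*u + u*(v*v)*u := this
      _ = (v*v)*(u*u) + u*(v*v)*u := by noncomm_ring
      _ = (v*v)*(u*u) + w*w := by rw [f4]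
  have quad : (u*v)*(u*v) + (v*u)*(v*u) = w*w + w*w := by
    apply half_cancel
    calc ((u*v)*(u*v) + (v*u)*(v*u)) + ((u*v)*(u*v) + (v*u)*(v*u))
        = ((u*v)*(u*v) + (u*v)*(u*v)) + ((v*u)*(v*u) + (v*u)*(v*u)) := by abel
      _ = ((u*u)*(v*v) + w*w) + ((v*v)*(u*u) + w*w) := by rw [g1, g2]
      _ = ((u*u)*(v*v) + (v*v)*(u*u)) + (w*w + w*w) := by abel
      _ = (w*w + w*w) + (w*w + w*w) := by rw [f6]
  have hcc : (u*v - v*u) * (u*v - v*u) = 0 := by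
    have expand : (u*v - v*u) * (u*v - v*u)
        = ((u*v)*(u*v) + (v*u)*(v*u)) - (u*(v*v)*u + v*(u*u)*v) := by noncomm_ring
    rw [expand, quad, f4, f5, sub_self]
  have hstarc : star (u*v - v*u) = -(u*v - v*u) := by
    rw [star_sub, star_mul, star_mul, hu, hv, ← hstar, ← hstar, hx, hy]
    noncomm_ring
  have hnorm : ‖u*v - v*u‖ * ‖u*v - v*u‖ = 0 := by
    rw [← CStarRing.norm_star_mul_self, hstarc, neg_mul, hcc, neg_zero, norm_zero]
  have : u*v - v*u = 0 := by
    rw [← norm_eq_zero]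
    exact mul_self_eq_zero.mp hnorm
  exact sub_eq_zero.mp this

private lemma jcomm (J : A ≃ₗ[ℂ] B)
    (hm : ∀ a b : A, J (a * b + b * a) = J a * J b + J b * J a)
    (hstar : ∀ a : A, J (star a) = star (J a))
    {x y : A} (h : ∀ x' ∈ ({x, star x} : Set A), ∀ y' ∈ ({y, star y} : Set A),
      x' * y' = y' * x') :
    J x * J y = J y * J x := by
  set p := (2⁻¹:ℂ) • (x + star x) with hp
  set q := ((2⁻¹:ℂ) * (-Complex.I)) • (x - star x) with hq
  set r := (2⁻¹:ℂ) • (y + star y) with hr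
  set s := ((2⁻¹:ℂ) * (-Complex.I)) • (y - star y) with hs
  have hxpq : x = p + Complex.I • q := by
    rw [hp, hq]
    match_scalars <;>
      first
        | linear_combination (1/2:ℂ)*Complex.I_sq
        | linear_combination (-1/2:ℂ)*Complex.I_sq
  have hypq : y = r + Complex.I • s := by
    rw [hr, hs]
    match_scalars <;>
      first
        | linear_combination (1/2:ℂ)*Complex.I_sq
        | linear_combination (-1/2:ℂ)*Complex.I_sq
  have hpsa : star p = p := by
    simp only [hp, star_smul, star_add, star_star]
    rw [show star (2⁻¹:ℂ) = (2⁻¹:ℂ) by simp]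
    module
  have hqsa : star q = q := by
    simp only [hq, star_smul, star_sub, star_star]
    rw [show star ((2⁻¹:ℂ) * (-Complex.I)) = (2⁻¹:ℂ) * Complex.I by simp]
    module
  have hrsa : star r = r := by
    simp only [hr, star_smul, star_add, star_star]
    rw [show star (2⁻¹:ℂ) = (2⁻¹:ℂ) by simp]
    module
  have hssa : star s = s := by
    simp only [hs, star_smul, star_sub, star_star]
    rw [show star ((2⁻¹:ℂ) * (-Complex.I)) = (2⁻¹:ℂ) * Complex.I by simp]
    module
  have hx1 := h x (by simp) y (by simp)
  have hx2 := h x (by simp) (star y) (by simp)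
  have hx3 := h (star x) (by simp) y (by simp)
  have hx4 := h (star x) (by simp) (star y) (by simp)
  have mulsmul : ∀ (c d : ℂ) (X Y : A), X*Y = Y*X → (c•X)*(d•Y) = (d•Y)*(c•X) := by
    intro c d X Y hc
    rw [smul_mul_smul_comm, smul_mul_smul_comm, hc, mul_comm c d]
  have e11 : (x + star x)*(y + star y) = (y + star y)*(x + star x) := by
    simp only [add_mul, mul_add, hx1, hx2, hx3, hx4]; abel
  have e12 : (x + star x)*(y - star y) = (y - star y)*(x + star x) := by
    simp only [add_mul, mul_add, sub_mul, mul_sub, hx1, hx2, hx3, hx4]; abel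
  have e21 : (x - star x)*(y + star y) = (y + star y)*(x - star x) := by
    simp only [add_mul, mul_add, sub_mul, mul_sub, hx1, hx2, hx3, hx4]; abel
  have e22 : (x - star x)*(y - star y) = (y - star y)*(x - star x) := by
    simp only [sub_mul, mul_sub, hx1, hx2, hx3, hx4]; abel
  have cpr : J p * J r = J r * J p := jcomm_sa J hm hstar (mulsmul _ _ _ _ e11) hpsa hrsa
  have cps : J p * J s = J s * J p := jcomm_sa J hm hstar (mulsmul _ _ _ _ e12) hpsa hssa
  have cqr : J q * J r = J r * J q := jcomm_sa J hm hstar (mulsmul _ _ _ _ e21) hqsa hrsa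
  have cqs : J q * J s = J s * J q := jcomm_sa J hm hstar (mulsmul _ _ _ _ e22) hqsa hssa
  clear_value p q r s
  rw [hxpq, hypq, map_add, map_add, map_smul, map_smul]
  simp only [add_mul, mul_add, smul_mul_assoc, mul_smul_comm, smul_smul, smul_add,
    cpr, cps, cqr, cqs]
  abel

private lemma junit (J : A ≃ₗ[ℂ] B)
    (hm : ∀ a b : A, J (a * b + b * a) = J a * J b + J b * J a)
    (hone : J 1 = 1) {a : A} (h : IsUnit a) : IsUnit (J a) := by
  obtain ⟨u, rfl⟩ := h
  have key : J (u : A) * J ((u⁻¹ : Aˣ) * (u⁻¹ : Aˣ)) * J (u : A) = 1 := by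
    rw [← jtriple J hm, show ((u:A) * ((u⁻¹:Aˣ) * (u⁻¹:Aˣ)) * u) = 1 by
      rw [← mul_assoc, Units.mul_inv, one_mul, Units.inv_mul], hone]
  set X := J (u : A)
  set Y := J ((u⁻¹ : Aˣ) * (u⁻¹ : Aˣ))
  have hYX : X * (Y * X) = 1 := by rw [← mul_assoc]; exact key
  have hXY : (X * Y) * X = 1 := key
  have heq : Y * X = X * Y := by
    calc Y * X = (X * Y) * X * (Y * X) := by rw [hXY, one_mul]
      _ = (X * Y) * (X * (Y * X)) := by noncomm_ring
      _ = X * Y := by rw [hYX, mul_one]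
  exact ⟨⟨X, Y * X, hYX, by rw [heq]; exact hXY⟩, rfl⟩

private lemma jspec (J : A ≃ₗ[ℂ] B)
    (hone : J 1 = 1)
    (hJ : ∀ a : A, IsUnit a → IsUnit (J a))
    (hS : ∀ b : B, IsUnit b → IsUnit (J.symm b)) (a : A) :
    spectrum ℂ (J a) = spectrum ℂ a := by
  ext z
  rw [spectrum.mem_iff, spectrum.mem_iff]
  constructor
  · intro hz hcon
    exact hz (by
      have : J (algebraMap ℂ A z - a) = algebraMap ℂ B z - J a := by
        rw [map_sub, Algebra.algebraMap_eq_smul_one, Algebra.algebraMap_eq_smul_one,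
          map_smul, hone]
      rw [← this]; exact hJ _ hcon)
  · intro hz hcon
    apply hz
    have : J.symm (algebraMap ℂ B z - J a) = algebraMap ℂ A z - a := by
      rw [map_sub, Algebra.algebraMap_eq_smul_one, Algebra.algebraMap_eq_smul_one,
        map_smul, ← hone, LinearEquiv.symm_apply_apply, LinearEquiv.symm_apply_apply]
    rw [← this]; exact hS _ hcon

private lemma jnorm_sa (J : A ≃ₗ[ℂ] B)
    (hstar : ∀ a : A, J (star a) = star (J a))
    (hspec : ∀ a : A, spectrum ℂ (J a) = spectrum ℂ a)
    {a : A} (ha : IsSelfAdjoint a) : ‖J a‖ = ‖a‖ := by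
  have h1 : IsSelfAdjoint (J a) := by rw [IsSelfAdjoint, ← hstar, ha.star_eq]
  have h2 := h1.spectralRadius_eq_nnnorm
  have h3 := ha.spectralRadius_eq_nnnorm
  rw [spectralRadius, hspec a, ← spectralRadius] at h2
  rw [h3] at h2
  have := congrArg ENNReal.toReal h2
  simpa using this.symm

private lemma jcommC (J : A ≃ₗ[ℂ] B)
    (hm : ∀ a b : A, J (a * b + b * a) = J a * J b + J b * J a)
    (hstar : ∀ a : A, J (star a) = star (J a))
    (C : CommCStarSub A) {x y : A} (hx : x ∈ C.val) (hy : y ∈ C.val) :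
    J x * J y = J y * J x := by
  apply jcomm J hm hstar
  intro x' hx' y' hy'
  have hx'' : x' ∈ C.val := by
    rcases hx' with h | h
    · rw [h]; exact hx
    · rw [Set.mem_singleton_iff] at h; rw [h]; exact star_mem hx
  have hy'' : y' ∈ C.val := by
    rcases hy' with h | h
    · rw [h]; exact hy
    · rw [Set.mem_singleton_iff] at h; rw [h]; exact star_mem hy
  exact C.2.2 x' hx'' y' hy''

private lemma jmulC (J : A ≃ₗ[ℂ] B)
    (hm : ∀ a b : A, J (a * b + b * a) = J a * J b + J b * J a)
    (hstar : ∀ a : A, J (star a) = star (J a))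
    (C : CommCStarSub A) {x y : A} (hx : x ∈ C.val) (hy : y ∈ C.val) :
    J (x * y) = J x * J y := by
  have hxy : x * y = y * x := C.2.2 x hx y hy
  have hJc : J x * J y = J y * J x := jcommC J hm hstar C hx hy
  apply half_cancel
  calc J (x*y) + J (x*y) = J (x*y + y*x) := by
        rw [← map_add]; congr 1; rw [hxy]
    _ = J x * J y + J y * J x := hm x y
    _ = J x * J y + J x * J y := by rw [hJc]

private def jImage (J : A ≃ₗ[ℂ] B)
    (hm : ∀ a b : A, J (a * b + b * a) = J a * J b + J b * J a)
    (hstar : ∀ a : A, J (star a) = star (J a))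
    (hone : J 1 = 1) (C : CommCStarSub A) : StarSubalgebra ℂ B where
  carrier := J '' (C.val : Set A)
  mul_mem' := by
    rintro a b ⟨x, hx, rfl⟩ ⟨y, hy, rfl⟩
    exact ⟨x * y, mul_mem hx hy, jmulC J hm hstar C hx hy⟩
  add_mem' := by
    rintro a b ⟨x, hx, rfl⟩ ⟨y, hy, rfl⟩
    exact ⟨x + y, add_mem hx hy, map_add J x y⟩
  one_mem' := ⟨1, one_mem C.val, hone⟩
  zero_mem' := ⟨0, zero_mem C.val, map_zero J⟩
  algebraMap_mem' := fun z =>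
    ⟨algebraMap ℂ A z, Subalgebra.algebraMap_mem _ z, by
      rw [Algebra.algebraMap_eq_smul_one, map_smul, hone,
        ← Algebra.algebraMap_eq_smul_one]⟩
  star_mem' := by
    rintro a ⟨x, hx, rfl⟩
    exact ⟨star x, star_mem hx, hstar x⟩

private lemma jImage_closed (J : A ≃ₗ[ℂ] B) (C : CommCStarSub A)
    (hnormC : ∀ x ∈ C.val, ‖J x‖ = ‖x‖) :
    IsClosed (J '' (C.val : Set A)) := by
  haveI : CompleteSpace C.val := C.2.1.completeSpace_coe
  have hiso : Isometry (fun c : C.val => J (c : A)) := by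
    apply Isometry.of_dist_eq
    intro c d
    rw [Subtype.dist_eq, dist_eq_norm, dist_eq_norm, ← map_sub]
    exact hnormC _ (sub_mem c.2 d.2)
  have hr := hiso.isClosedEmbedding.isClosed_range
  rwa [Set.image_eq_range]

end JordanAux

/-- Let `J : A → B` be a unital Jordan *-isomorphism between unital
C*-algebras, i.e. a linear bijection preserving the Jordan product
`a ∘ b = (a b + b a)/2`, the involution, and the unit. Then the map `C ↦ J[C]` is an
order isomorphism from the poset `C(A)` of unital commutative C*-subalgebras of `A` onto
`C(B)`. -/
theorem jordan_star_iso_induces_orderIso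
    {A B : Type*} [CStarAlgebra A] [CStarAlgebra B]
    (J : A ≃ₗ[ℂ] B)
    (hstar : ∀ a : A, J (star a) = star (J a))
    (hone : J 1 = 1)
    (hjordan : ∀ a b : A,
      J ((2⁻¹ : ℂ) • (a * b + b * a)) = (2⁻¹ : ℂ) • (J a * J b + J b * J a)) :
    ∃ e : CommCStarSub A ≃o CommCStarSub B,
      ∀ C : CommCStarSub A, ((e C).val : Set B) = J '' (C.val : Set A) := by
  have hm := jm J hjordan
  have hm' : ∀ a b : B, J.symm (a*b+b*a) = J.symm a * J.symm b + J.symm b * J.symm a := by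
    intro a b
    apply J.injective
    rw [J.apply_symm_apply, hm (J.symm a) (J.symm b), J.apply_symm_apply,
      J.apply_symm_apply]
  have hstar' : ∀ b : B, J.symm (star b) = star (J.symm b) := by
    intro b
    apply J.injective
    rw [J.apply_symm_apply, hstar, J.apply_symm_apply]
  have hone' : J.symm 1 = 1 := by rw [← hone, J.symm_apply_apply]
  have hunitJ : ∀ a : A, IsUnit a → IsUnit (J a) := fun a ha => junit J hm hone ha
  have hunitS : ∀ b : B, IsUnit b → IsUnit (J.symm b) :=
    fun b hb => junit J.symm hm' hone' hb
  have hspecJ : ∀ a, spectrum ℂ (J a) = spectrum ℂ a := jspec J hone hunitJ hunitS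
  have hspecS : ∀ b, spectrum ℂ (J.symm b) = spectrum ℂ b := by
    apply jspec J.symm hone' hunitS
    intro a ha
    have heq : J.symm.symm a = J a := by simp
    rw [heq]; exact hunitJ a ha
  have hnsaJ : ∀ a : A, IsSelfAdjoint a → ‖J a‖ = ‖a‖ :=
    fun a ha => jnorm_sa J hstar hspecJ ha
  have hnsaS : ∀ b : B, IsSelfAdjoint b → ‖J.symm b‖ = ‖b‖ :=
    fun b hb => jnorm_sa J.symm hstar' hspecS hb
  have hnormC : ∀ (C : CommCStarSub A), ∀ x ∈ C.val, ‖J x‖ = ‖x‖ := by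
    intro C x hx
    have h2 : J (star x * x) = star (J x) * J x := by
      rw [jmulC J hm hstar C (star_mem hx) hx, hstar]
    have h3 : ‖J x‖ * ‖J x‖ = ‖x‖ * ‖x‖ := by
      rw [← CStarRing.norm_star_mul_self, ← h2,
        hnsaJ _ (IsSelfAdjoint.star_mul_self x), CStarRing.norm_star_mul_self]
    exact (mul_self_inj_of_nonneg (norm_nonneg _) (norm_nonneg _)).mp h3
  have hnormD : ∀ (D : CommCStarSub B), ∀ y ∈ D.val, ‖J.symm y‖ = ‖y‖ := by
    intro D y hy
    have h2 : J.symm (star y * y) = star (J.symm y) * J.symm y := by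
      rw [jmulC J.symm hm' hstar' D (star_mem hy) hy, hstar']
    have h3 : ‖J.symm y‖ * ‖J.symm y‖ = ‖y‖ * ‖y‖ := by
      rw [← CStarRing.norm_star_mul_self, ← h2,
        hnsaS _ (IsSelfAdjoint.star_mul_self y), CStarRing.norm_star_mul_self]
    exact (mul_self_inj_of_nonneg (norm_nonneg _) (norm_nonneg _)).mp h3
  let F : CommCStarSub A → CommCStarSub B := fun C =>
    ⟨jImage J hm hstar hone C, jImage_closed J C (hnormC C), by
      rintro b1 ⟨x, hx, rfl⟩ b2 ⟨y, hy, rfl⟩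
      exact jcommC J hm hstar C hx hy⟩
  let G : CommCStarSub B → CommCStarSub A := fun D =>
    ⟨jImage J.symm hm' hstar' hone' D, jImage_closed J.symm D (hnormD D), by
      rintro a1 ⟨x, hx, rfl⟩ a2 ⟨y, hy, rfl⟩
      exact jcommC J.symm hm' hstar' D hx hy⟩
  have hGF : ∀ C, G (F C) = C := by
    intro C
    apply Subtype.ext
    apply SetLike.ext'
    show J.symm '' (J '' (C.val : Set A)) = (C.val : Set A)
    rw [Set.image_image]; simp
  have hFG : ∀ D, F (G D) = D := by
    intro D
    apply Subtype.ext
    apply SetLike.ext'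
    show J '' (J.symm '' (D.val : Set B)) = (D.val : Set B)
    rw [Set.image_image]; simp
  let eqv : CommCStarSub A ≃ CommCStarSub B := ⟨F, G, hGF, hFG⟩
  have hmono : ∀ {C D : CommCStarSub A}, eqv C ≤ eqv D ↔ C ≤ D := by
    intro C D
    constructor
    · intro h x hx
      have hmem : J x ∈ J '' (D.val : Set A) := h ⟨x, hx, rfl⟩
      obtain ⟨y, hy, hxy⟩ := hmem
      rwa [← J.injective hxy]
    · rintro h b ⟨x, hx, rfl⟩
      exact ⟨x, h hx, rfl⟩
  exact ⟨⟨eqv, hmono⟩, fun C => rfl⟩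
end
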